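/- arXiv:1602.05123 — 4 statements merged into one kernel-verified Lean document; each statement's English description precedes it below -/
import Mathlib

section
/- Let H be a self-adjoint operator, P an orthogonal projection commuting-compatible with the form domain of H, Q = I − P, and V a bounded self-adjoint operator with 0 ≤ V ≤ M. Then for any δ ∈ (0,1), as quadratic forms, H₀ + V ≥ P(H₀ + (1−δ)V)P + Q(H₀ + (1−δ⁻¹)V)Q, provided P and Q commute with H₀ (i.e., P H₀ Q = 0). -/
noncomputable def qform {H : Type*} [NormedAddCommGroup H] [InnerProductSpace ℂ H]
    (A : H →L[ℂ] H) (f : H) : ℝ :=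
  Complex.re (@inner ℂ H _ (A f) f)

section aux
variable {H : Type*} [NormedAddCommGroup H] [InnerProductSpace ℂ H] [CompleteSpace H]

lemma qform_symm {V : H →L[ℂ] H} (hV : IsSelfAdjoint V) (p q : H) :
    (@inner ℂ H _ (V q) p).re = (@inner ℂ H _ (V p) q).re := by
  conv_lhs => rw [← hV.adjoint_eq, ContinuousLinearMap.adjoint_inner_left,
    ← inner_conj_symm]
  exact Complex.conj_re _

lemma qform_expand {V : H →L[ℂ] H} (hV : IsSelfAdjoint V) (c d : ℝ) (p q : H) :
    qform V ((c:ℂ) • p + (d:ℂ) • q)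
      = c^2 * qform V p + 2*(c*d) * (@inner ℂ H _ (V p) q).re + d^2 * qform V q := by
  simp only [qform, map_add, map_smul, inner_add_left, inner_add_right,
    inner_smul_left, inner_smul_right, Complex.conj_ofReal, Complex.add_re,
    ← Complex.ofReal_mul, Complex.re_ofReal_mul]
  rw [qform_symm hV p q]
  ring

lemma key {V : H →L[ℂ] H} (hV : IsSelfAdjoint V) (hV0 : ∀ f, 0 ≤ qform V f)
    {δ : ℝ} (hδ : 0 < δ) (p q : H) :
    0 ≤ δ * qform V p + 2 * (@inner ℂ H _ (V p) q).re + δ⁻¹ * qform V q := by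
  have h := hV0 ((Real.sqrt δ : ℂ) • p + (((Real.sqrt δ)⁻¹ : ℝ) : ℂ) • q)
  rw [qform_expand hV] at h
  have h1 : Real.sqrt δ ^ 2 = δ := Real.sq_sqrt hδ.le
  have h2 : (Real.sqrt δ)⁻¹ ^ 2 = δ⁻¹ := by rw [inv_pow, h1]
  have h3 : Real.sqrt δ * (Real.sqrt δ)⁻¹ = 1 :=
    mul_inv_cancel₀ (Real.sqrt_pos.mpr hδ).ne'
  rw [h1, h2, h3] at h
  linarith

end aux

/-- Let `H₀` be self-adjoint with `P H₀ Q = 0` for an orthogonal projection `P`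
(`Q = I − P`), and let `V` be a bounded self-adjoint operator with `0 ≤ V ≤ M`.
Then for any `δ ∈ (0,1)`, as quadratic forms,
`H₀ + V ≥ P(H₀ + (1−δ)V)P + Q(H₀ + (1−δ⁻¹)V)Q`. -/
theorem stmt4 {H : Type*} [NormedAddCommGroup H] [InnerProductSpace ℂ H] [CompleteSpace H]
    (H₀ V P : H →L[ℂ] H) (M δ : ℝ)
    (hH₀ : IsSelfAdjoint H₀) (hP : IsSelfAdjoint P) (hPproj : P ∘L P = P)
    (hPQ : P ∘L (H₀ ∘L (1 - P)) = 0)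
    (hV : IsSelfAdjoint V)
    (hV0 : ∀ f, 0 ≤ qform V f)
    (hVM : ∀ f, qform V f ≤ M * ‖f‖ ^ 2)
    (hδ : δ ∈ Set.Ioo (0 : ℝ) 1) :
    ∀ f : H,
      qform (P ∘L (H₀ + ((1 - δ : ℝ) : ℂ) • V) ∘L P
        + (1 - P) ∘L (H₀ + ((1 - δ⁻¹ : ℝ) : ℂ) • V) ∘L (1 - P)) f
      ≤ qform (H₀ + V) f := by
  intro f
  set p := P f with hp
  set q := (1 - P) f with hq
  have hQ : IsSelfAdjoint (1 - P : H →L[ℂ] H) := by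
    simp [IsSelfAdjoint, star_sub, hP.star_eq]
  -- rewrite sandwiched quadratic forms
  have sandwichP : ∀ (A : H →L[ℂ] H),
      qform (P ∘L A ∘L P) f = (@inner ℂ H _ (A p) p).re := by
    intro A
    simp only [qform, ContinuousLinearMap.comp_apply]
    rw [← hP.adjoint_eq, ContinuousLinearMap.adjoint_inner_left, hP.adjoint_eq]
  have sandwichQ : ∀ (A : H →L[ℂ] H),
      qform ((1-P) ∘L A ∘L (1-P)) f = (@inner ℂ H _ (A q) q).re := by
    intro A
    simp only [qform, ContinuousLinearMap.comp_apply]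
    rw [← hQ.adjoint_eq, ContinuousLinearMap.adjoint_inner_left, hQ.adjoint_eq]
  -- cross H₀ terms vanish
  have hQHP : (@inner ℂ H _ (H₀ q) p).re = 0 := by
    have : @inner ℂ H _ (H₀ q) p = @inner ℂ H _ ((P ∘L (H₀ ∘L (1 - P))) f) f := by
      rw [hp, hq]
      simp only [ContinuousLinearMap.comp_apply]
      conv_rhs => rw [← hP.adjoint_eq, ContinuousLinearMap.adjoint_inner_left]
      rw [hP.adjoint_eq]
    rw [this, hPQ]
    simp
  have hPHQ : (@inner ℂ H _ (H₀ p) q).re = 0 :=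
    (qform_symm hH₀ q p).trans hQHP
  have hfp : f = p + q := by simp [hp, hq]
  -- expand RHS
  have hRHS : qform (H₀ + V) f
      = (@inner ℂ H _ (H₀ p) p).re + (@inner ℂ H _ (H₀ q) q).re
        + (qform V p + 2 * (@inner ℂ H _ (V p) q).re + qform V q) := by
    have e1 : qform (H₀ + V) f = qform H₀ f + qform V f := by
      simp [qform, inner_add_left]
    have e2 : qform H₀ f = (@inner ℂ H _ (H₀ p) p).re + (@inner ℂ H _ (H₀ q) q).re := by
      rw [hfp]
      simp only [qform, map_add, inner_add_left, inner_add_right, Complex.add_re]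
      linarith [hPHQ, hQHP]
    have e3 : qform V f = qform V p + 2 * (@inner ℂ H _ (V p) q).re + qform V q := by
      have h := qform_expand hV 1 1 p q
      simp only [Complex.ofReal_one, one_smul, one_pow, one_mul, mul_one] at h
      rw [hfp, h]
    rw [e1, e2, e3]
  -- expand LHS
  have hsmul : ∀ (c : ℝ) (x : H),
      (@inner ℂ H _ ((H₀ + (c : ℂ) • V) x) x).re
        = (@inner ℂ H _ (H₀ x) x).re + c * qform V x := by
    intro c x
    simp only [qform, ContinuousLinearMap.add_apply, ContinuousLinearMap.smul_apply,
      inner_add_left, inner_smul_left, Complex.conj_ofReal, Complex.add_re,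
      Complex.re_ofReal_mul]
  have hLHS : qform (P ∘L (H₀ + ((1 - δ : ℝ) : ℂ) • V) ∘L P
        + (1 - P) ∘L (H₀ + ((1 - δ⁻¹ : ℝ) : ℂ) • V) ∘L (1 - P)) f
      = (@inner ℂ H _ (H₀ p) p).re + (1 - δ) * qform V p
        + ((@inner ℂ H _ (H₀ q) q).re + (1 - δ⁻¹) * qform V q) := by
    have : qform (P ∘L (H₀ + ((1 - δ : ℝ) : ℂ) • V) ∘L P
        + (1 - P) ∘L (H₀ + ((1 - δ⁻¹ : ℝ) : ℂ) • V) ∘L (1 - P)) f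
      = qform (P ∘L (H₀ + ((1 - δ : ℝ) : ℂ) • V) ∘L P) f
        + qform ((1 - P) ∘L (H₀ + ((1 - δ⁻¹ : ℝ) : ℂ) • V) ∘L (1 - P)) f := by
      simp [qform, inner_add_left]
    rw [this, sandwichP, sandwichQ, hsmul, hsmul]
  have hk := key hV hV0 hδ.1 p q
  rw [hLHS, hRHS]
  linarith
end

section
/- Suppose ν(E) = Σ_{j: E_j < E} N₀(E − E_j) where N₀(E) = c·E_+^{d/2}(1 + o(1)) as E → ∞ with c = ω_d/(2π)^d, and the eigenvalue counting function ρ(E) = #{j : E_j < E} satisfies ρ(E) = C E^θ (1 + o(1)) as E → ∞ for some C, θ > 0. Then ν(E) = C · (dθ/(d + 2θ)) · B(d/2, θ) · (ω_d/(2π)^d) · E^{d/2 + θ} (1 + o(1)) as E → ∞, where B is the Euler beta function. -/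
open Filter Real

/-- The semiclassical coefficient `ω_d/(2π)^d`, with `ω_d = π^{d/2}/Γ(d/2+1)` the
volume of the unit ball in `ℝ^d`. -/
noncomputable def semiclassCoeff (d : ℕ) : ℝ :=
  π ^ ((d : ℝ) / 2) / Real.Gamma ((d : ℝ) / 2 + 1) / (2 * π) ^ (d : ℕ)

section aux

open MeasureTheory intervalIntegral

lemma real_beta (a b : ℝ) (ha : 0 < a) (hb : 0 < b) :
    ∫ x in (0:ℝ)..1, x ^ (a-1) * (1-x) ^ (b-1) =
      Real.Gamma a * Real.Gamma b / Real.Gamma (a+b) := by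
  have key := Complex.Gamma_mul_Gamma_eq_betaIntegral (s := a) (t := b) (by simpa) (by simpa)
  have hint : Complex.betaIntegral a b =
      ((∫ x in (0:ℝ)..1, x ^ (a-1) * (1-x) ^ (b-1) : ℝ) : ℂ) := by
    rw [Complex.betaIntegral, ← intervalIntegral.integral_ofReal]
    refine intervalIntegral.integral_congr (fun x hx => ?_)
    rw [Set.uIcc_of_le (by norm_num)] at hx
    have h1 := Complex.ofReal_cpow hx.1 (a - 1)
    have h2 := Complex.ofReal_cpow (by linarith [hx.2] : (0:ℝ) ≤ 1 - x) (b - 1)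
    push_cast at h1 h2 ⊢
    rw [← h1, ← h2]
  rw [hint, ← Complex.ofReal_add, Complex.Gamma_ofReal, Complex.Gamma_ofReal,
    Complex.Gamma_ofReal, ← Complex.ofReal_mul, ← Complex.ofReal_mul] at key
  have h := Complex.ofReal_inj.mp key
  have hG : Real.Gamma (a+b) ≠ 0 := (Real.Gamma_pos_of_pos (by linarith)).ne'
  field_simp
  linarith [h]

lemma const_eq (p θ : ℝ) (hp : 0 < p) (hθ : 0 < θ) :
    θ * ∫ x in (0:ℝ)..1, x ^ (θ-1) * (1-x) ^ p
      = (p*θ/(p+θ)) * (Real.Gamma p * Real.Gamma θ / Real.Gamma (p+θ)) := by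
  have h := real_beta θ (p+1) hθ (by linarith)
  simp only [add_sub_cancel_right] at h
  rw [h]
  have e1 : θ + (p+1) = (p+θ) + 1 := by ring
  rw [e1, Real.Gamma_add_one (by positivity : p+θ ≠ 0), Real.Gamma_add_one hp.ne']
  have h1 : Real.Gamma (p+θ) ≠ 0 := (Real.Gamma_pos_of_pos (by linarith)).ne'
  have h2 : p + θ ≠ 0 := by positivity
  field_simp

lemma count_iff (Es : ℕ → ℝ) (hEsmono : Monotone Es) (hEstop : Tendsto Es atTop atTop)
    (t : ℝ) : ∀ j, Es j < t ↔ j < ({j | Es j < t}.ncard) := by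
  obtain ⟨J, hJ⟩ := eventually_atTop.mp (hEstop.eventually_ge_atTop t)
  have hfin : {j | Es j < t}.Finite := by
    refine (Set.finite_Iio J).subset (fun j hj => ?_)
    by_contra h
    exact absurd (hJ j (not_lt.mp h)) (not_le.mpr hj)
  intro j
  rw [Set.ncard_eq_toFinset_card _ hfin]
  set F := hfin.toFinset with hF
  have hmem : ∀ i, i ∈ F ↔ Es i < t := fun i => by simp [hF]
  constructor
  · intro hj
    have hsub : Finset.Iic j ⊆ F := fun i hi => (hmem i).mpr
      (lt_of_le_of_lt (hEsmono (Finset.mem_Iic.mp hi)) hj)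
    have := Finset.card_le_card hsub
    rw [Nat.card_Iic] at this
    omega
  · intro hj
    by_contra h
    have hsub : F ⊆ Finset.Iio j := by
      intro i hi
      rw [Finset.mem_Iio]
      by_contra hij
      exact absurd (lt_of_le_of_lt (hEsmono (not_lt.mp hij)) ((hmem i).mp hi)) h
    have := Finset.card_le_card hsub
    rw [Nat.card_Iio] at this
    omega

lemma sum_part (f : ℕ → ℝ) (g : ℕ → ℕ) (hg : Monotone g) (hg0 : g 0 = 0) (m : ℕ) :
    ∑ j ∈ Finset.range (g m), f j
      = ∑ k ∈ Finset.range m, ∑ j ∈ Finset.Ico (g k) (g (k+1)), f j := by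
  induction m with
  | zero => simp [hg0]
  | succ m ih =>
    rw [Finset.sum_range_succ, ← ih, Finset.range_eq_Ico, Finset.range_eq_Ico]
    exact (Finset.sum_Ico_consecutive f (Nat.zero_le _) (hg (Nat.le_succ m))).symm

lemma cont_b (p : ℝ) (hp : 0 < p) : Continuous (fun u : ℝ => (1-u) ^ p) :=
  (continuous_const.sub continuous_id).rpow_const (fun _ => Or.inr hp.le)

lemma intble (p θ : ℝ) (hp : 0 < p) (hθ : 0 < θ) (a b : ℝ) :
    IntervalIntegrable (fun x : ℝ => θ * x ^ (θ-1) * (1-x) ^ p) MeasureTheory.volume a b := by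
  have h1 : IntervalIntegrable (fun x : ℝ => θ * x ^ (θ-1)) MeasureTheory.volume a b :=
    (intervalIntegral.intervalIntegrable_rpow' (by linarith)).const_mul θ
  exact h1.mul_continuousOn ((cont_b p hp).continuousOn)

lemma int_exact (θ : ℝ) (hθ : 0 < θ) (a b : ℝ) (ha : 0 ≤ a) :
    ∫ x in a..b, θ * x ^ (θ-1) = b ^ θ - a ^ θ := by
  rw [intervalIntegral.integral_const_mul, integral_rpow (Or.inl (by linarith))]
  have : θ - 1 + 1 = θ := by ring
  rw [this]
  field_simp

lemma int_bounds (p θ : ℝ) (hp : 0 < p) (hθ : 0 < θ) (a b : ℝ)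
    (ha : 0 ≤ a) (hab : a ≤ b) (hb : b ≤ 1) :
    (b ^ θ - a ^ θ) * (1-b) ^ p ≤ (∫ x in a..b, θ * x ^ (θ-1) * (1-x) ^ p) ∧
    (∫ x in a..b, θ * x ^ (θ-1) * (1-x) ^ p) ≤ (b ^ θ - a ^ θ) * (1-a) ^ p := by
  have hint := intble p θ hp hθ a b
  have hint2 : ∀ r : ℝ, IntervalIntegrable (fun x : ℝ => θ * x ^ (θ-1) * r)
      MeasureTheory.volume a b :=
    fun r => ((intervalIntegral.intervalIntegrable_rpow' (by linarith)).const_mul θ).mul_const r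
  have key : ∀ r : ℝ, ∫ x in a..b, θ * x ^ (θ-1) * r = (b ^ θ - a ^ θ) * r := by
    intro r
    rw [intervalIntegral.integral_mul_const, int_exact θ hθ a b ha]
  constructor
  · rw [← key]
    refine intervalIntegral.integral_mono_on hab (hint2 _) hint (fun x hx => ?_)
    have hx0 : 0 ≤ x := le_trans ha hx.1
    have : (1-b) ^ p ≤ (1-x) ^ p :=
      Real.rpow_le_rpow (by linarith [hx.2]) (by linarith [hx.2]) hp.le
    have hθx : 0 ≤ θ * x ^ (θ-1) := by positivity
    exact mul_le_mul_of_nonneg_left this hθx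
  · rw [← key]
    refine intervalIntegral.integral_mono_on hab hint (hint2 _) (fun x hx => ?_)
    have hx0 : 0 ≤ x := le_trans ha hx.1
    have : (1-x) ^ p ≤ (1-a) ^ p :=
      Real.rpow_le_rpow (by linarith [hx.2, hb]) (by linarith [hx.1]) hp.le
    have hθx : 0 ≤ θ * x ^ (θ-1) := by positivity
    exact mul_le_mul_of_nonneg_left this hθx

lemma tendsto_scale (F : ℝ → ℝ) (c r q : ℝ) (hq : 0 < q)
    (h : Tendsto (fun t => F t / t ^ r) atTop (nhds c)) :
    Tendsto (fun E : ℝ => F (q*E) / E ^ r) atTop (nhds (c * q ^ r)) := by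
  have h1 : Tendsto (fun E : ℝ => q * E) atTop atTop :=
    Tendsto.const_mul_atTop hq tendsto_id
  have h2 := (h.comp h1).mul_const (q ^ r)
  refine h2.congr' ?_
  filter_upwards [eventually_gt_atTop (0:ℝ)] with E hE
  have hqE : (q * E) ^ r = q ^ r * E ^ r := Real.mul_rpow hq.le hE.le
  have : q ^ r ≠ 0 := by positivity
  have hEr : E ^ r ≠ 0 := by positivity
  simp only [Function.comp_apply]
  rw [hqE]
  field_simp

lemma tendsto_shift (F : ℝ → ℝ) (c r a : ℝ)
    (h : Tendsto (fun t => F t / t ^ r) atTop (nhds c)) :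
    Tendsto (fun E : ℝ => F (E - a) / E ^ r) atTop (nhds c) := by
  have h1 : Tendsto (fun E : ℝ => E - a) atTop atTop :=
    tendsto_atTop_add_const_right atTop (-a) tendsto_id
  have h2 := h.comp h1
  have h3 : Tendsto (fun E : ℝ => ((E - a)/E) ^ r) atTop (nhds 1) := by
    have hb : Tendsto (fun E : ℝ => (E - a)/E) atTop (nhds 1) := by
      have : Tendsto (fun E : ℝ => 1 - a/E) atTop (nhds (1 - 0)) :=
        tendsto_const_nhds.sub (tendsto_const_nhds.div_atTop tendsto_id)
      rw [sub_zero] at this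
      refine this.congr' ?_
      filter_upwards [eventually_gt_atTop (0:ℝ)] with E hE
      field_simp
    have hc : ContinuousAt (fun x : ℝ => x ^ r) 1 :=
      Real.continuousAt_rpow_const 1 r (Or.inl one_ne_zero)
    have := hc.tendsto.comp hb
    simpa [Real.one_rpow, Function.comp_def] using this
  have h4 := h2.mul h3
  rw [mul_one] at h4
  refine h4.congr' ?_
  filter_upwards [eventually_gt_atTop (max 0 a)] with E hE
  rw [max_lt_iff] at hE
  have hEa : (0:ℝ) < E - a := by linarith [hE.2]
  have heq : ((E - a)/E) ^ r = (E-a) ^ r / E ^ r := Real.div_rpow hEa.le hE.1.le r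
  have hEr : (E:ℝ) ^ r ≠ 0 := (Real.rpow_pos_of_pos hE.1 r).ne'
  have hEar : (E - a) ^ r ≠ 0 := (Real.rpow_pos_of_pos hEa r).ne'
  simp only [Function.comp, heq]
  field_simp

end aux

set_option maxHeartbeats 2000000 in
/-- If `ν(E) = Σ_j N₀(E − E_j)` where `N₀` is non-decreasing, vanishes on `(−∞,0]`
and satisfies `N₀(E) = (ω_d/(2π)^d) E^{d/2}(1+o(1))` as `E → ∞`, and the counting
function `ρ(E) = #{j : E_j < E}` of the non-decreasing sequence `E_j → ∞` satisfies
`ρ(E) = C E^θ (1+o(1))`, then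
`ν(E) = C (dθ/(d+2θ)) B(d/2,θ) (ω_d/(2π)^d) E^{d/2+θ}(1+o(1))` as `E → ∞`,
where `B(x,y) = Γ(x)Γ(y)/Γ(x+y)` is the Euler beta function. -/
theorem stmt12 (d : ℕ) (hd : 1 ≤ d) (N₀ : ℝ → ℝ) (Es : ℕ → ℝ) (C θ : ℝ)
    (hC : 0 < C) (hθ : 0 < θ)
    (hN₀mono : Monotone N₀) (hN₀zero : ∀ E ≤ (0 : ℝ), N₀ E = 0)
    (hN₀asym : Tendsto (fun E : ℝ => N₀ E / E ^ ((d : ℝ) / 2)) atTop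
      (nhds (semiclassCoeff d)))
    (hEsmono : Monotone Es) (hEstop : Tendsto Es atTop atTop)
    (hρ : Tendsto (fun E : ℝ => ({j | Es j < E}.ncard : ℝ) / E ^ θ) atTop (nhds C)) :
    Tendsto (fun E : ℝ => (∑' j, N₀ (E - Es j)) / E ^ ((d : ℝ) / 2 + θ)) atTop
      (nhds (C * ((d * θ) / (d + 2 * θ))
        * (Real.Gamma ((d : ℝ) / 2) * Real.Gamma θ / Real.Gamma ((d : ℝ) / 2 + θ))
        * semiclassCoeff d)) := by
  have hd' : (0:ℝ) < d := by exact_mod_cast hd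
  set p : ℝ := (d : ℝ) / 2 with hp'
  have hp : 0 < p := by positivity
  set c : ℝ := semiclassCoeff d with hc'
  have hc : 0 < c := by
    have hG : 0 < Real.Gamma (p + 1) := Real.Gamma_pos_of_pos (by positivity)
    rw [hc', semiclassCoeff, ← hp']
    positivity
  -- target constant
  set I : ℝ := θ * ∫ x in (0:ℝ)..1, x ^ (θ-1) * (1-x) ^ p with hI'
  set K : ℝ := C * c * I with hK'
  have hKeq : K = C * ((d * θ) / (d + 2 * θ))
      * (Real.Gamma ((d : ℝ) / 2) * Real.Gamma θ / Real.Gamma ((d : ℝ) / 2 + θ))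
      * semiclassCoeff d := by
    rw [hK', hI', const_eq p θ hp hθ, ← hc', ← hp']
    have h1 : (d:ℝ) * θ / ((d:ℝ) + 2 * θ) = p * θ / (p + θ) := by
      rw [hp']
      rw [div_eq_div_iff (by positivity) (by positivity)]
      ring
    rw [h1]
    ring
  rw [← hKeq]
  -- counting function
  set n : ℝ → ℕ := fun t => ({j | Es j < t}).ncard with hn'
  have hiff : ∀ t j, Es j < t ↔ j < n t := fun t => count_iff Es hEsmono hEstop t
  have hnmono : Monotone n := by
    intro s t hst
    by_contra h
    push_neg at h
    have h1 : n t < n s := h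
    have h2 : Es (n t) < s := (hiff s (n t)).mpr h1
    have h3 : Es (n t) < t := lt_of_lt_of_le h2 hst
    exact absurd ((hiff t (n t)).mp h3) (lt_irrefl _)
  have hρ' : Tendsto (fun E : ℝ => ((n E : ℕ) : ℝ) / E ^ θ) atTop (nhds C) := hρ
  set ν : ℝ → ℝ := fun E => ∑' j, N₀ (E - Es j) with hν'
  have hν : ∀ E : ℝ, ν E = ∑ j ∈ Finset.range (n E), N₀ (E - Es j) := by
    intro E
    refine tsum_eq_sum (fun j hj => ?_)
    rw [Finset.mem_range] at hj
    have : ¬ Es j < E := fun h => hj ((hiff E j).mp h)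
    exact hN₀zero _ (by linarith [not_lt.mp this])
  -- the integral as p+θ exponent
  have hIF : (fun t : ℝ => ((n t : ℕ) : ℝ)) = fun t => ((n t : ℕ) : ℝ) := rfl
  rw [Metric.tendsto_nhds]
  intro ε hε
  -- choose m
  have hCc1 : (0:ℝ) < C * c + 1 := by positivity
  set ε' : ℝ := ε / (2 * (C * c + 1)) with hε''
  have hε' : 0 < ε' := by positivity
  -- uniform continuity of (1-u)^p on Icc 0 1
  obtain ⟨δ, hδ, hδ'⟩ := (Metric.uniformContinuousOn_iff).mp
    ((isCompact_Icc (a := (0:ℝ)) (b := 1)).uniformContinuousOn_of_continuous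
      ((cont_b p hp).continuousOn)) ε' hε'
  obtain ⟨m0, hm0⟩ := exists_nat_gt (1/δ)
  set m : ℕ := max m0 1 with hm'
  have hm1 : 1 ≤ m := le_max_right _ _
  have hmpos : (0:ℝ) < m := by exact_mod_cast lt_of_lt_of_le Nat.one_pos hm1
  have hmδ : 1/(m:ℝ) < δ := by
    have h1 : (1:ℝ)/δ < m0 := hm0
    have h2 : (m0:ℝ) ≤ m := by exact_mod_cast le_max_left m0 1
    rw [div_lt_iff₀ hmpos]
    rw [div_lt_iff₀ hδ] at h1
    nlinarith
  -- abbreviations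
  set A : ℕ → ℝ := fun k => ((k:ℝ)/m) ^ θ with hA'
  set B : ℕ → ℝ := fun k => (1 - (k:ℝ)/m) ^ p with hB'
  set Lm : ℝ := ∑ k ∈ Finset.range m, (A (k+1) - A k) * B (k+1) with hLm'
  set Um : ℝ := ∑ k ∈ Finset.range m, (A (k+1) - A k) * B k with hUm'
  have hA0 : A 0 = 0 := by
    simp only [hA', Nat.cast_zero, zero_div]
    exact Real.zero_rpow hθ.ne'
  have hAm : A m = 1 := by
    simp only [hA']
    rw [div_self hmpos.ne', Real.one_rpow]
  -- bracket : Lm ≤ I/... ≤ Um  where Iint = ∫₀¹ θ x^(θ-1)(1-x)^p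
  have hIint : I = ∫ x in (0:ℝ)..1, θ * x ^ (θ-1) * (1-x) ^ p := by
    rw [hI', ← intervalIntegral.integral_const_mul]
    congr 1
    ext x
    ring
  have hadj : ∀ k < m, IntervalIntegrable (fun x : ℝ => θ * x ^ (θ-1) * (1-x) ^ p)
      MeasureTheory.volume ((k:ℝ)/m) (((k+1:ℕ):ℝ)/m) := fun k _ => intble p θ hp hθ _ _
  have hsplit : ∑ k ∈ Finset.range m,
      (∫ x in ((k:ℝ)/m)..(((k+1:ℕ):ℝ)/m), θ * x ^ (θ-1) * (1-x) ^ p) = I := by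
    rw [hIint]
    have := intervalIntegral.sum_integral_adjacent_intervals (a := fun k : ℕ => ((k:ℝ)/m))
      (μ := MeasureTheory.volume) (n := m) hadj
    rw [this]
    norm_num
    rw [div_self hmpos.ne']
  have hkm : ∀ k, k < m → (0:ℝ) ≤ (k:ℝ)/m ∧ ((k:ℝ)/m) ≤ ((k+1:ℕ):ℝ)/m ∧ (((k+1:ℕ):ℝ)/m) ≤ 1 := by
    intro k hk
    have hkm1 : ((k:ℝ)+1) ≤ m := by exact_mod_cast hk
    refine ⟨by positivity, ?_, ?_⟩
    · push_cast
      gcongr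
      linarith
    · push_cast
      rw [div_le_one hmpos]
      exact hkm1
  have hLI : Lm ≤ I := by
    rw [← hsplit, hLm']
    refine Finset.sum_le_sum (fun k hk => ?_)
    rw [Finset.mem_range] at hk
    obtain ⟨h1, h2, h3⟩ := hkm k hk
    have := (int_bounds p θ hp hθ _ _ h1 h2 h3).1
    simpa [hA', hB'] using this
  have hIU : I ≤ Um := by
    rw [← hsplit, hUm']
    refine Finset.sum_le_sum (fun k hk => ?_)
    rw [Finset.mem_range] at hk
    obtain ⟨h1, h2, h3⟩ := hkm k hk
    have := (int_bounds p θ hp hθ _ _ h1 h2 h3).2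
    simpa [hA', hB'] using this
  have hAmono : ∀ k < m, A k ≤ A (k+1) := by
    intro k hk
    refine Real.rpow_le_rpow (by positivity) ?_ hθ.le
    have : (k:ℝ) ≤ (k:ℝ)+1 := by linarith
    rw [div_le_div_iff₀ hmpos hmpos]
    push_cast
    nlinarith
  have hULm : Um - Lm ≤ ε' := by
    have h1 : Um - Lm = ∑ k ∈ Finset.range m, (A (k+1) - A k) * (B k - B (k+1)) := by
      rw [hUm', hLm', ← Finset.sum_sub_distrib]
      congr 1
      ext k
      ring
    rw [h1]
    have h2 : ∀ k ∈ Finset.range m, (A (k+1) - A k) * (B k - B (k+1)) ≤ (A (k+1) - A k) * ε' := by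
      intro k hk
      rw [Finset.mem_range] at hk
      refine mul_le_mul_of_nonneg_left ?_ (by linarith [hAmono k hk])
      obtain ⟨hk1, hk2, hk3⟩ := hkm k hk
      have hd1 : dist ((k:ℝ)/m) (((k+1:ℕ):ℝ)/m) < δ := by
        rw [Real.dist_eq, abs_sub_comm, abs_of_nonneg (by linarith)]
        push_cast
        have : ((k:ℝ)+1)/m - (k:ℝ)/m = 1/m := by field_simp; ring
        rw [this]
        exact hmδ
      have := hδ' ((k:ℝ)/m) ⟨hk1, le_trans hk2 hk3⟩ (((k+1:ℕ):ℝ)/m) ⟨by positivity, hk3⟩ hd1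
      rw [Real.dist_eq] at this
      calc B k - B (k+1) ≤ |B k - B (k+1)| := le_abs_self _
        _ ≤ ε' := by
            simp only [hB']
            exact le_of_lt (by convert this using 2 <;> ring_nf)
    calc ∑ k ∈ Finset.range m, (A (k+1) - A k) * (B k - B (k+1))
        ≤ ∑ k ∈ Finset.range m, (A (k+1) - A k) * ε' := Finset.sum_le_sum h2
      _ = (A m - A 0) * ε' := by rw [← Finset.sum_mul, Finset.sum_range_sub]
      _ = ε' := by rw [hAm, hA0]; ring
    -- bucket machinery
  set g : ℕ → ℝ → ℕ := fun k E => if k = 0 then 0 else n ((k:ℝ)/m * E) with hg'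
  set lb : ℕ → ℝ → ℝ := fun k E => if k = 0 then Es 0 else (k:ℝ)/m * E with hlb'
  set Lo : ℝ → ℝ := fun E => ∑ k ∈ Finset.range m,
    ((g (k+1) E : ℝ) - (g k E : ℝ)) * N₀ (E - ((k:ℝ)+1)/m * E) with hLo'
  set Hi : ℝ → ℝ := fun E => ∑ k ∈ Finset.range m,
    ((g (k+1) E : ℝ) - (g k E : ℝ)) * N₀ (E - lb k E) with hHi'
  have hgsucc : ∀ k E, g (k+1) E = n (((k:ℝ)+1)/m * E) := by
    intro k E
    simp only [hg', Nat.succ_ne_zero, if_false]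
    norm_num
  have hgmono : ∀ E : ℝ, 0 < E → Monotone (fun k => g k E) := by
    intro E hE
    refine monotone_nat_of_le_succ (fun k => ?_)
    rcases Nat.eq_zero_or_pos k with hk | hk
    · simp [hg', hk]
    · have hk0 : k ≠ 0 := hk.ne'
      rw [hgsucc]
      simp only [hg', if_neg hk0]
      refine hnmono ?_
      have : (k:ℝ)/m ≤ ((k:ℝ)+1)/m := by
        gcongr
        linarith
      nlinarith
  have hbound : ∀ E : ℝ, 0 < E → Lo E ≤ ν E ∧ ν E ≤ Hi E := by
    intro E hE
    have hgm : g m E = n E := by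
      have hm0 : m ≠ 0 := by omega
      simp only [hg', if_neg hm0, div_self hmpos.ne', one_mul]
    have hsum : ν E = ∑ k ∈ Finset.range m,
        ∑ j ∈ Finset.Ico (g k E) (g (k+1) E), N₀ (E - Es j) := by
      rw [hν E, ← hgm]
      exact sum_part _ _ (hgmono E hE) (by simp [hg']) m
    have hcard : ∀ k, ((Finset.Ico (g k E) (g (k+1) E)).card : ℝ)
        = (g (k+1) E : ℝ) - (g k E : ℝ) := by
      intro k
      rw [Nat.card_Ico, Nat.cast_sub (hgmono E hE (Nat.le_succ k))]
    constructor
    · rw [hsum, hLo']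
      refine Finset.sum_le_sum (fun k hk => ?_)
      have hlow : ∀ j ∈ Finset.Ico (g k E) (g (k+1) E),
          N₀ (E - ((k:ℝ)+1)/m * E) ≤ N₀ (E - Es j) := by
        intro j hj
        rw [Finset.mem_Ico] at hj
        have hj2 : j < n (((k:ℝ)+1)/m * E) := by rw [← hgsucc k E]; exact hj.2
        have : Es j < ((k:ℝ)+1)/m * E := (hiff _ j).mpr hj2
        exact hN₀mono (by linarith)
      have := Finset.card_nsmul_le_sum _ _ _ hlow
      rw [nsmul_eq_mul] at this
      calc ((g (k+1) E : ℝ) - (g k E : ℝ)) * N₀ (E - ((k:ℝ)+1)/m * E)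
          = ((Finset.Ico (g k E) (g (k+1) E)).card : ℝ) * N₀ (E - ((k:ℝ)+1)/m * E) := by
            rw [hcard]
        _ ≤ _ := this
    · rw [hsum, hHi']
      refine Finset.sum_le_sum (fun k hk => ?_)
      have hup : ∀ j ∈ Finset.Ico (g k E) (g (k+1) E),
          N₀ (E - Es j) ≤ N₀ (E - lb k E) := by
        intro j hj
        rw [Finset.mem_Ico] at hj
        have hlbj : lb k E ≤ Es j := by
          rcases Nat.eq_zero_or_pos k with hk0 | hk0
          · simp only [hlb', hk0, if_pos rfl]
            exact hEsmono (Nat.zero_le j)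
          · have hk0' : k ≠ 0 := hk0.ne'
            simp only [hlb', if_neg hk0']
            have hj1 : n ((k:ℝ)/m * E) ≤ j := by
              have := hj.1
              simp only [hg', if_neg hk0'] at this
              exact this
            by_contra hcon
            push_neg at hcon
            exact absurd ((hiff _ j).mp hcon) (by omega)
        exact hN₀mono (by linarith)
      have := Finset.sum_le_card_nsmul _ _ _ hup
      rw [nsmul_eq_mul] at this
      calc ∑ j ∈ Finset.Ico (g k E) (g (k+1) E), N₀ (E - Es j)
          ≤ ((Finset.Ico (g k E) (g (k+1) E)).card : ℝ) * N₀ (E - lb k E) := this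
        _ = ((g (k+1) E : ℝ) - (g k E : ℝ)) * N₀ (E - lb k E) := by rw [hcard]
  -- count tendsto
  have hcnt : ∀ k < m, Tendsto (fun E : ℝ => ((g (k+1) E : ℝ) - (g k E : ℝ)) / E ^ θ)
      atTop (nhds (C * A (k+1) - C * A k)) := by
    intro k hk
    have hq1 : (0:ℝ) < ((k:ℝ)+1)/m := by positivity
    have h1 : Tendsto (fun E : ℝ => ((n (((k:ℝ)+1)/m * E) : ℕ) : ℝ) / E ^ θ)
        atTop (nhds (C * A (k+1))) := by
      have := tendsto_scale (fun t => ((n t : ℕ) : ℝ)) C θ (((k:ℝ)+1)/m) hq1 hρ'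
      convert this using 2
      simp only [hA']
      push_cast
      ring
    have h2 : Tendsto (fun E : ℝ => ((g k E : ℕ) : ℝ) / E ^ θ)
        atTop (nhds (C * A k)) := by
      rcases Nat.eq_zero_or_pos k with hk0 | hk0
      · subst hk0
        simp only [hg', if_pos rfl, Nat.cast_zero, zero_div, hA0, mul_zero]
        exact tendsto_const_nhds
      · have hk0' : k ≠ 0 := hk0.ne'
        have hqk : (0:ℝ) < (k:ℝ)/m := by
          have : (0:ℝ) < (k:ℝ) := by exact_mod_cast hk0
          positivity
        have := tendsto_scale (fun t => ((n t : ℕ) : ℝ)) C θ ((k:ℝ)/m) hqk hρ'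
        simp only [hg', if_neg hk0']
        convert this using 2
    have h3 := h1.sub h2
    refine h3.congr (fun E => ?_)
    rw [hgsucc k E, sub_div]
  -- N₀ lower-term tendsto
  have hNlo : ∀ k < m, Tendsto (fun E : ℝ => N₀ (E - ((k:ℝ)+1)/m * E) / E ^ p)
      atTop (nhds (c * B (k+1))) := by
    intro k hk
    rcases eq_or_lt_of_le (Nat.succ_le_of_lt hk) with hk1 | hk1
    · -- k+1 = m
      have hq1 : ((k:ℝ)+1)/m = 1 := by
        rw [div_eq_one_iff_eq hmpos.ne']
        exact_mod_cast congrArg (Nat.cast : ℕ → ℝ) hk1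
      have hBm : B (k+1) = 0 := by
        simp only [hB']
        push_cast
        rw [hq1, sub_self]
        exact Real.zero_rpow hp.ne'
      rw [hBm, mul_zero]
      have : (fun E : ℝ => N₀ (E - ((k:ℝ)+1)/m * E) / E ^ p) = fun E : ℝ => 0 / E ^ p := by
        ext E
        rw [hq1, one_mul, sub_self, hN₀zero 0 le_rfl]
      rw [this]
      simpa using tendsto_const_nhds
    · -- k+1 < m
      have hq' : (0:ℝ) < 1 - ((k:ℝ)+1)/m := by
        have : ((k:ℝ)+1) < m := by exact_mod_cast hk1
        rw [sub_pos, div_lt_one hmpos]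
        exact this
      have := tendsto_scale N₀ c p (1 - ((k:ℝ)+1)/m) hq' hN₀asym
      have heq : c * (1 - ((k:ℝ)+1)/m) ^ p = c * B (k+1) := by
        simp only [hB']
        push_cast
        ring_nf
      rw [heq] at this
      refine this.congr (fun E => ?_)
      congr 2
      ring
  -- N₀ upper-term tendsto
  have hNhi : ∀ k < m, Tendsto (fun E : ℝ => N₀ (E - lb k E) / E ^ p)
      atTop (nhds (c * B k)) := by
    intro k hk
    rcases Nat.eq_zero_or_pos k with hk0 | hk0
    · subst hk0
      have hB0 : B 0 = 1 := by
        simp only [hB', Nat.cast_zero, zero_div, sub_zero, Real.one_rpow]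
      rw [hB0, mul_one]
      simp only [hlb', if_pos rfl]
      exact tendsto_shift N₀ c p (Es 0) hN₀asym
    · have hk0' : k ≠ 0 := hk0.ne'
      have hq' : (0:ℝ) < 1 - (k:ℝ)/m := by
        have : (k:ℝ) < m := by exact_mod_cast hk
        rw [sub_pos, div_lt_one hmpos]
        exact this
      have := tendsto_scale N₀ c p (1 - (k:ℝ)/m) hq' hN₀asym
      have heq : c * (1 - (k:ℝ)/m) ^ p = c * B k := by simp only [hB']
      rw [heq] at this
      simp only [hlb', if_neg hk0']
      refine this.congr (fun E => ?_)
      congr 2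
      ring
  -- assemble Lo and Hi limits
  have hEx : ∀ᶠ E : ℝ in atTop, (0:ℝ) < E := eventually_gt_atTop 0
  have hsplitdiv : ∀ (E : ℝ), 0 < E → ∀ x y : ℝ,
      (x * y) / E ^ (p + θ) = x / E ^ θ * (y / E ^ p) := by
    intro E hE x y
    rw [Real.rpow_add hE, div_mul_div_comm]
    ring_nf
  have hLoT : Tendsto (fun E : ℝ => Lo E / E ^ (p + θ)) atTop (nhds (C * c * Lm)) := by
    have hsum : Tendsto (fun E : ℝ => ∑ k ∈ Finset.range m,
        (((g (k+1) E : ℝ) - (g k E : ℝ)) / E ^ θ * (N₀ (E - ((k:ℝ)+1)/m * E) / E ^ p)))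
        atTop (nhds (∑ k ∈ Finset.range m, (C * A (k+1) - C * A k) * (c * B (k+1)))) := by
      refine tendsto_finset_sum _ (fun k hk => ?_)
      rw [Finset.mem_range] at hk
      exact (hcnt k hk).mul (hNlo k hk)
    have hval : (∑ k ∈ Finset.range m, (C * A (k+1) - C * A k) * (c * B (k+1))) = C * c * Lm := by
      rw [hLm', Finset.mul_sum]
      refine Finset.sum_congr rfl (fun k _ => ?_)
      ring
    rw [hval] at hsum
    refine hsum.congr' ?_
    filter_upwards [hEx] with E hE
    rw [hLo', Finset.sum_div]
    refine Finset.sum_congr rfl (fun k _ => ?_)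
    exact (hsplitdiv E hE _ _).symm
  have hHiT : Tendsto (fun E : ℝ => Hi E / E ^ (p + θ)) atTop (nhds (C * c * Um)) := by
    have hsum : Tendsto (fun E : ℝ => ∑ k ∈ Finset.range m,
        (((g (k+1) E : ℝ) - (g k E : ℝ)) / E ^ θ * (N₀ (E - lb k E) / E ^ p)))
        atTop (nhds (∑ k ∈ Finset.range m, (C * A (k+1) - C * A k) * (c * B k))) := by
      refine tendsto_finset_sum _ (fun k hk => ?_)
      rw [Finset.mem_range] at hk
      exact (hcnt k hk).mul (hNhi k hk)
    have hval : (∑ k ∈ Finset.range m, (C * A (k+1) - C * A k) * (c * B k)) = C * c * Um := by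
      rw [hUm', Finset.mul_sum]
      refine Finset.sum_congr rfl (fun k _ => ?_)
      ring
    rw [hval] at hsum
    refine hsum.congr' ?_
    filter_upwards [hEx] with E hE
    rw [hHi', Finset.sum_div]
    refine Finset.sum_congr rfl (fun k _ => ?_)
    exact (hsplitdiv E hE _ _).symm
  -- final squeeze
  have hCc0 : (0:ℝ) ≤ C * c := by positivity
  have hUK : C * c * Um - K ≤ C * c * ε' := by
    rw [hK']
    nlinarith [hIU, hULm, hLI]
  have hKL : K - C * c * Lm ≤ C * c * ε' := by
    rw [hK']
    nlinarith [hLI, hULm, hIU]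
  have hCce : C * c * ε' < ε / 2 := by
    have hmul : C * c * ε' * (2 * (C * c + 1)) = C * c * ε := by
      rw [hε'']
      field_simp
    nlinarith [hmul, hCc1, hε, hCc0]
  filter_upwards [hEx, (Metric.tendsto_nhds.mp hLoT) (ε/2) (by positivity),
    (Metric.tendsto_nhds.mp hHiT) (ε/2) (by positivity)] with E hE hdLo hdHi
  have hExp : (0:ℝ) < E ^ (p + θ) := Real.rpow_pos_of_pos hE _
  obtain ⟨hb1, hb2⟩ := hbound E hE
  have hdiv1 : Lo E / E ^ (p + θ) ≤ ν E / E ^ (p + θ) := by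
    exact div_le_div_of_nonneg_right hb1 hExp.le
  have hdiv2 : ν E / E ^ (p + θ) ≤ Hi E / E ^ (p + θ) := by
    exact div_le_div_of_nonneg_right hb2 hExp.le
  rw [Real.dist_eq, abs_lt] at hdLo hdHi ⊢
  constructor
  · linarith [hdLo.1, hdHi.1]
  · linarith [hdHi.2, hdLo.2]
end

section
/- Karamata Tauberian theorem (counting-measure version): let μ be a non-negative Borel measure on [0,∞) whose Laplace transform L(t) = ∫ e^{−tE} dμ(E) is finite for all t > 0 and satisfies L(t) = a t^{−γ}(1 + o(1)) as t ↓ 0 for some a > 0, γ > 0. Then μ([0,E)) = (a/Γ(γ+1)) E^γ (1 + o(1)) as E → ∞. -/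
open Filter MeasureTheory Set Real Polynomial

namespace Karamata


noncomputable def clamp01 (y : ℝ) : ℝ := max 0 (min 1 y)

lemma clamp01_nonneg (y : ℝ) : 0 ≤ clamp01 y := le_max_left _ _

lemma clamp01_le_one (y : ℝ) : clamp01 y ≤ 1 := max_le zero_le_one (min_le_left _ _)

lemma clamp01_of_nonpos {y : ℝ} (h : y ≤ 0) : clamp01 y = 0 :=
  max_eq_left (min_le_of_right_le h)

lemma clamp01_of_one_le {y : ℝ} (h : 1 ≤ y) : clamp01 y = 1 := by
  rw [clamp01, min_eq_left h, max_eq_right zero_le_one]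

lemma continuous_clamp01 : Continuous clamp01 :=
  continuous_const.max (continuous_const.min continuous_id)

noncomputable def ramp (b d x : ℝ) : ℝ := clamp01 ((x - b) / d) * (max x b)⁻¹

lemma continuous_ramp {b d : ℝ} (hb : 0 < b) : Continuous (ramp b d) := by
  apply Continuous.mul
  · exact continuous_clamp01.comp ((continuous_id.sub continuous_const).div_const d)
  · exact (continuous_id.max continuous_const).inv₀
      fun x => ne_of_gt (lt_of_lt_of_le hb (le_max_right _ _))

lemma ramp_nonneg {b d : ℝ} (hb : 0 < b) (x : ℝ) : 0 ≤ ramp b d x :=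
  mul_nonneg (clamp01_nonneg _) (inv_nonneg.2 (le_trans hb.le (le_max_right _ _)))

lemma mul_ramp_nonneg {b d : ℝ} (hb : 0 < b) {x : ℝ} (hx : 0 ≤ x) : 0 ≤ x * ramp b d x :=
  mul_nonneg hx (ramp_nonneg hb x)

lemma mul_ramp_le_one {b d : ℝ} (hb : 0 < b) {x : ℝ} (hx : 0 ≤ x) : x * ramp b d x ≤ 1 := by
  have hmax : 0 < max x b := lt_of_lt_of_le hb (le_max_right _ _)
  have h1 : x * (max x b)⁻¹ ≤ 1 := by
    rw [← div_eq_mul_inv, div_le_one hmax]; exact le_max_left _ _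
  calc x * ramp b d x = clamp01 ((x - b) / d) * (x * (max x b)⁻¹) := by rw [ramp]; ring
    _ ≤ 1 * 1 := by
        apply mul_le_mul (clamp01_le_one _) h1 (mul_nonneg hx (inv_nonneg.2 hmax.le)) zero_le_one
    _ = 1 := one_mul 1

lemma mul_ramp_of_le {b d : ℝ} (hd : 0 < d) {x : ℝ} (hx : x ≤ b) : x * ramp b d x = 0 := by
  rw [ramp, clamp01_of_nonpos (div_nonpos_iff.2 (Or.inr ⟨by linarith, hd.le⟩)), zero_mul, mul_zero]

lemma mul_ramp_of_ge {b d : ℝ} (hb : 0 < b) (hd : 0 < d) {x : ℝ} (hbd : b + d ≤ x) :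
    x * ramp b d x = 1 := by
  have hx : 0 < x := by linarith
  have hmax : max x b = x := max_eq_left (by linarith)
  rw [ramp, clamp01_of_one_le (by rw [le_div_iff₀ hd]; linarith), hmax, one_mul,
    mul_inv_cancel₀ hx.ne']



variable {γ : ℝ}

lemma exp_pow_eq (u : ℝ) (k : ℕ) : exp (-u) ^ (k + 1) = exp (-(((k : ℝ) + 1) * u)) := by
  rw [← Real.exp_nat_mul]; congr 1; push_cast; ring

lemma gamma_term (hγ : 0 < γ) (k : ℕ) :
    ∫ u in Ioi (0 : ℝ), exp (-u) ^ (k + 1) * u ^ (γ - 1)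
      = ((k : ℝ) + 1) ^ (-γ) * Real.Gamma γ := by
  have hK : (0 : ℝ) < (k : ℝ) + 1 := by positivity
  have := Real.integral_rpow_mul_exp_neg_mul_Ioi hγ hK
  calc ∫ u in Ioi (0 : ℝ), exp (-u) ^ (k + 1) * u ^ (γ - 1)
      = ∫ u in Ioi (0 : ℝ), u ^ (γ - 1) * exp (-(((k : ℝ) + 1) * u)) := by
        refine setIntegral_congr_fun measurableSet_Ioi fun u _ => ?_
        rw [exp_pow_eq, mul_comm]
    _ = (1 / ((k : ℝ) + 1)) ^ γ * Real.Gamma γ := this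
    _ = ((k : ℝ) + 1) ^ (-γ) * Real.Gamma γ := by
        rw [one_div, Real.inv_rpow hK.le, ← Real.rpow_neg hK.le]

lemma gamma_term_integrable (hγ : 0 < γ) (k : ℕ) :
    IntegrableOn (fun u : ℝ => exp (-u) ^ (k + 1) * u ^ (γ - 1)) (Ioi 0) := by
  have hK : (0 : ℝ) < (k : ℝ) + 1 := by positivity
  have h := integrableOn_rpow_mul_exp_neg_mul_rpow (s := γ - 1) (p := 1) (b := (k : ℝ) + 1)
    (by linarith) zero_lt_one hK
  refine h.congr_fun (fun u _ => ?_) measurableSet_Ioi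
  dsimp only
  rw [Real.rpow_one, exp_pow_eq, neg_mul, mul_comm]


lemma expand (q : ℝ[X]) (x : ℝ) :
    x * q.eval x = ∑ k ∈ Finset.range (q.natDegree + 1), q.coeff k * x ^ (k + 1) := by
  rw [Polynomial.eval_eq_sum_range, Finset.mul_sum]
  exact Finset.sum_congr rfl fun k _ => by ring

lemma limit_integrand_expand (q : ℝ[X]) (u : ℝ) :
    (exp (-u) * q.eval (exp (-u))) * u ^ (γ - 1)
      = ∑ k ∈ Finset.range (q.natDegree + 1), q.coeff k * (exp (-u) ^ (k + 1) * u ^ (γ - 1)) := by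
  rw [expand, Finset.sum_mul]
  exact Finset.sum_congr rfl fun k _ => by ring

lemma limit_integrable (hγ : 0 < γ) (q : ℝ[X]) :
    IntegrableOn (fun u : ℝ => (exp (-u) * q.eval (exp (-u))) * u ^ (γ - 1)) (Ioi 0) := by
  simp_rw [limit_integrand_expand]
  exact integrable_finset_sum _ fun k _ => (gamma_term_integrable hγ k).const_mul _

lemma limit_expand (hγ : 0 < γ) (q : ℝ[X]) :
    ∫ u in Ioi (0 : ℝ), (exp (-u) * q.eval (exp (-u))) * u ^ (γ - 1)
      = ∑ k ∈ Finset.range (q.natDegree + 1),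
          q.coeff k * (((k : ℝ) + 1) ^ (-γ) * Real.Gamma γ) := by
  simp_rw [limit_integrand_expand]
  rw [integral_finset_sum _ fun k _ => (gamma_term_integrable hγ k).const_mul _]
  exact Finset.sum_congr rfl fun k _ => by rw [integral_const_mul, gamma_term hγ k]

lemma g_integrand_eq (u : ℝ) :
    (if Real.exp (-1) < Real.exp (-u) then (1:ℝ) else 0) * u ^ (γ - 1)
      = (Iio (1:ℝ)).indicator (fun v => v ^ (γ - 1)) u := by
  rw [Set.indicator_apply]
  simp only [Real.exp_lt_exp, neg_lt_neg_iff, Set.mem_Iio]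
  split_ifs <;> simp

lemma wInt : IntegrableOn (fun v : ℝ => v ^ (γ - 1)) (Ioo 0 1) ∨ True := Or.inr trivial

lemma g_limit_integrable (hγ : 0 < γ) :
    IntegrableOn (fun u : ℝ => (if Real.exp (-1) < Real.exp (-u) then (1:ℝ) else 0) * u ^ (γ - 1))
      (Ioi 0) := by
  simp_rw [g_integrand_eq]
  have h : IntegrableOn (fun v : ℝ => v ^ (γ - 1)) (Ioo 0 1) := by
    have := (intervalIntegral.intervalIntegrable_rpow' (r := γ - 1) (by linarith)
      (a := 0) (b := 1))
    rw [intervalIntegrable_iff_integrableOn_Ioc_of_le zero_le_one] at this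
    exact this.mono_set Ioo_subset_Ioc_self
  rw [IntegrableOn, integrable_indicator_iff measurableSet_Iio, IntegrableOn,
    Measure.restrict_restrict measurableSet_Iio, Set.Iio_inter_Ioi]
  exact h

lemma g_limit_integral (hγ : 0 < γ) :
    ∫ u in Ioi (0 : ℝ), (if Real.exp (-1) < Real.exp (-u) then (1:ℝ) else 0) * u ^ (γ - 1)
      = 1 / γ := by
  simp_rw [g_integrand_eq]
  rw [setIntegral_indicator measurableSet_Iio, Set.Ioi_inter_Iio,
    ← integral_Ioc_eq_integral_Ioo, ← intervalIntegral.integral_of_le zero_le_one,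
    integral_rpow (Or.inl (by linarith))]
  rw [sub_add_cancel, Real.one_rpow, Real.zero_rpow hγ.ne']
  ring

lemma w_bound (hγ : 0 < γ) {x : ℝ} (h1 : 1/2 ≤ x) (h2 : x ≤ 2) :
    x ^ (γ - 1) ≤ 2 ^ γ + 2 := by
  rcases le_or_gt 1 γ with h | h
  · have : x ^ (γ - 1) ≤ (2:ℝ) ^ (γ - 1) :=
      Real.rpow_le_rpow (by linarith) h2 (by linarith)
    have h2' : (2:ℝ) ^ (γ - 1) ≤ 2 ^ γ :=
      Real.rpow_le_rpow_of_exponent_le one_le_two (by linarith)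
    linarith
  · have hx : (0:ℝ) < 1/2 := by norm_num
    have hb : x ^ (γ - 1) ≤ ((1:ℝ)/2) ^ (γ - 1) :=
      Real.rpow_le_rpow_of_nonpos hx h1 (by linarith)
    have : ((1:ℝ)/2) ^ (γ - 1) = 2 ^ (1 - γ) := by
      rw [one_div, Real.inv_rpow (by norm_num : (0:ℝ) ≤ 2), ← Real.rpow_neg (by norm_num)]
      ring_nf
    have h3 : (2:ℝ) ^ (1 - γ) ≤ 2 ^ (1:ℝ) :=
      Real.rpow_le_rpow_of_exponent_le one_le_two (by linarith)
    have h4 : (0:ℝ) ≤ 2 ^ γ := Real.rpow_nonneg (by norm_num) _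
    rw [Real.rpow_one] at h3
    linarith [hb, this ▸ hb]

lemma err_pointwise (s η u : ℝ) :
    (Icc s (s+η)).indicator (fun _ => (1:ℝ)) u * u ^ (γ - 1)
      = (Icc s (s+η)).indicator (fun v => v ^ (γ - 1)) u := by
  rw [Set.indicator_apply, Set.indicator_apply]
  split_ifs <;> simp

lemma w_integrableOn_Icc (hs : (0:ℝ) < s) (hη : 0 ≤ η) :
    IntegrableOn (fun v : ℝ => v ^ (γ - 1)) (Icc s (s+η)) := by
  apply ContinuousOn.integrableOn_compact isCompact_Icc
  intro x hx
  exact (Real.continuousAt_rpow_const x (γ-1)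
    (Or.inl (ne_of_gt (lt_of_lt_of_le hs hx.1)))).continuousWithinAt

lemma err_integrable (hγ : 0 < γ) {s η : ℝ} (hs : (0:ℝ) < s) (hη : 0 ≤ η) :
    IntegrableOn
      (fun u : ℝ => (Icc s (s+η)).indicator (fun _ => (1:ℝ)) u * u ^ (γ - 1)) (Ioi 0) := by
  simp_rw [err_pointwise]
  exact (((w_integrableOn_Icc hs hη).integrable_indicator measurableSet_Icc)).integrableOn

lemma err_bound (hγ : 0 < γ) {s η : ℝ} (hs : 1/2 ≤ s) (hη : 0 ≤ η) (h2 : s + η ≤ 2) :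
    ∫ u in Ioi (0:ℝ), (Icc s (s+η)).indicator (fun _ => (1:ℝ)) u * u ^ (γ - 1)
      ≤ (2 ^ γ + 2) * η := by
  have hs0 : (0:ℝ) < s := by linarith
  simp_rw [err_pointwise]
  rw [setIntegral_indicator measurableSet_Icc,
    Set.inter_eq_self_of_subset_right (show Icc s (s+η) ⊆ Ioi 0 from fun x hx => lt_of_lt_of_le hs0 hx.1)]
  calc ∫ u in Icc s (s+η), u ^ (γ - 1)
      ≤ ∫ _ in Icc s (s+η), (2 ^ γ + 2 : ℝ) := by
        apply setIntegral_mono_on (w_integrableOn_Icc hs0 hη)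
          (integrableOn_const (by rw [Real.volume_Icc]; exact ENNReal.ofReal_ne_top))
          measurableSet_Icc
        intro x hx
        exact w_bound hγ (le_trans hs hx.1) (le_trans hx.2 h2)
    _ = (2 ^ γ + 2) * η := by
        rw [setIntegral_const, measureReal_def, Real.volume_Icc, smul_eq_mul,
          ENNReal.toReal_ofReal (by linarith), mul_comm]
        congr 1
        ring



variable {μ : Measure ℝ} {γ a : ℝ}

noncomputable def Lam (μ : Measure ℝ) (t : ℝ) : ℝ :=
  (∫⁻ E, ENNReal.ofReal (Real.exp (-t * E)) ∂μ).toReal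

lemma aeNonneg (hsupp : μ (Set.Iio 0) = 0) : ∀ᵐ E ∂μ, 0 ≤ E := by
  rw [ae_iff]
  simp only [not_le]; exact hsupp

lemma exp_meas (t : ℝ) : AEStronglyMeasurable (fun E : ℝ => exp (-t * E)) μ :=
  (Real.continuous_exp.comp (continuous_const.mul continuous_id)).aestronglyMeasurable

lemma integrable_exp_mul
    (hfin : ∀ t : ℝ, 0 < t → (∫⁻ E, ENNReal.ofReal (Real.exp (-t * E)) ∂μ) < ⊤)
    {t : ℝ} (ht : 0 < t) : Integrable (fun E : ℝ => exp (-t * E)) μ := by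
  refine ⟨exp_meas t, ?_⟩
  rw [hasFiniteIntegral_iff_ofReal (ae_of_all _ fun E => (exp_pos _).le)]
  exact hfin t ht

lemma Lam_eq {t : ℝ} : Lam μ t = ∫ E, exp (-t * E) ∂μ :=
  (integral_eq_lintegral_of_nonneg_ae (ae_of_all _ fun E => (exp_pos _).le) (exp_meas t)).symm

lemma measure_Iio_lt_top
    (hfin : ∀ t : ℝ, 0 < t → (∫⁻ E, ENNReal.ofReal (Real.exp (-t * E)) ∂μ) < ⊤)
    (hsupp : μ (Set.Iio 0) = 0) (E₀ : ℝ) : μ (Set.Iio E₀) < ⊤ := by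
  have hsub : Set.Iio E₀ ⊆ Set.Iio 0 ∪ Set.Icc 0 E₀ := by
    intro x hx
    rcases lt_or_ge x 0 with h | h
    · exact Or.inl h
    · exact Or.inr ⟨h, le_of_lt hx⟩
  have hIcc : μ (Set.Icc 0 E₀) < ⊤ := by
    set c : ENNReal := ENNReal.ofReal (exp (-(max E₀ 0)))
    have hc0 : c ≠ 0 := (ENNReal.ofReal_pos.mpr (exp_pos _)).ne'
    have hle : c * μ (Set.Icc 0 E₀) ≤ ∫⁻ E, ENNReal.ofReal (Real.exp (-1 * E)) ∂μ := by
      rw [← setLIntegral_const (Set.Icc 0 E₀) c]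
      refine le_trans (setLIntegral_mono ?_ ?_) (setLIntegral_le_lintegral _ _)
      · exact (Real.continuous_exp.comp (continuous_const.mul continuous_id)).measurable.ennreal_ofReal
      · intro x hx
        apply ENNReal.ofReal_le_ofReal
        apply Real.exp_le_exp.2
        have : x ≤ max E₀ 0 := le_max_of_le_left hx.2
        linarith
    have hlt : c * μ (Set.Icc 0 E₀) < ⊤ := lt_of_le_of_lt hle (hfin 1 one_pos)
    by_contra h
    rw [not_lt, top_le_iff] at h
    rw [h, ENNReal.mul_top hc0] at hlt
    exact lt_irrefl _ hlt
  calc μ (Set.Iio E₀) ≤ μ (Set.Iio 0 ∪ Set.Icc 0 E₀) := measure_mono hsub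
    _ ≤ μ (Set.Iio 0) + μ (Set.Icc 0 E₀) := measure_union_le _ _
    _ < ⊤ := by rw [hsupp, zero_add]; exact hIcc


lemma g_eq_indicator {t : ℝ} (ht : 0 < t) (E : ℝ) :
    (if Real.exp (-1) < Real.exp (-t * E) then (1:ℝ) else 0)
      = (Set.Iio (1/t)).indicator (fun _ => (1:ℝ)) E := by
  rw [Set.indicator_apply]
  have : Real.exp (-1) < Real.exp (-t * E) ↔ E ∈ Set.Iio (1/t) := by
    rw [Real.exp_lt_exp, Set.mem_Iio, lt_div_iff₀ ht]
    constructor <;> intro h <;> nlinarith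
  rw [if_congr this rfl rfl]

lemma integrable_g
    (hfin : ∀ t : ℝ, 0 < t → (∫⁻ E, ENNReal.ofReal (Real.exp (-t * E)) ∂μ) < ⊤)
    (hsupp : μ (Set.Iio 0) = 0) {t : ℝ} (ht : 0 < t) :
    Integrable (fun E : ℝ => if Real.exp (-1) < Real.exp (-t * E) then (1:ℝ) else 0) μ := by
  simp_rw [g_eq_indicator ht]
  rw [integrable_indicator_iff measurableSet_Iio]
  exact integrableOn_const (measure_Iio_lt_top hfin hsupp _).ne

lemma measure_Iio_toReal_eq {t : ℝ} (ht : 0 < t) :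
    (μ (Set.Iio (1/t))).toReal
      = ∫ E, (if Real.exp (-1) < Real.exp (-t * E) then (1:ℝ) else 0) ∂μ := by
  simp_rw [g_eq_indicator ht]
  rw [integral_indicator_const (1:ℝ) measurableSet_Iio, smul_eq_mul, mul_one, measureReal_def]

lemma poly_pointwise (q : ℝ[X]) (t E : ℝ) :
    exp (-t * E) * q.eval (exp (-t * E))
      = ∑ k ∈ Finset.range (q.natDegree + 1),
          q.coeff k * exp (-(((k:ℝ) + 1) * t) * E) := by
  rw [expand]
  refine Finset.sum_congr rfl fun k _ => ?_
  congr 1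
  rw [← Real.exp_nat_mul]
  congr 1
  push_cast
  ring

lemma poly_integrable
    (hfin : ∀ t : ℝ, 0 < t → (∫⁻ E, ENNReal.ofReal (Real.exp (-t * E)) ∂μ) < ⊤)
    (q : ℝ[X]) {t : ℝ} (ht : 0 < t) :
    Integrable (fun E : ℝ => exp (-t * E) * q.eval (exp (-t * E))) μ := by
  simp_rw [poly_pointwise]
  exact integrable_finset_sum _ fun k _ =>
    (integrable_exp_mul hfin (by positivity)).const_mul _

lemma poly_integral_eq
    (hfin : ∀ t : ℝ, 0 < t → (∫⁻ E, ENNReal.ofReal (Real.exp (-t * E)) ∂μ) < ⊤)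
    (q : ℝ[X]) {t : ℝ} (ht : 0 < t) :
    ∫ E, exp (-t * E) * q.eval (exp (-t * E)) ∂μ
      = ∑ k ∈ Finset.range (q.natDegree + 1), q.coeff k * Lam μ (((k:ℝ) + 1) * t) := by
  simp_rw [poly_pointwise]
  rw [integral_finset_sum _ fun k _ => (integrable_exp_mul hfin (by positivity)).const_mul _]
  exact Finset.sum_congr rfl fun k _ => by rw [integral_const_mul, Lam_eq]

lemma tendsto_term
    (hasym : Tendsto (fun t : ℝ => Lam μ t * t ^ γ) (nhdsWithin 0 (Set.Ioi 0)) (nhds a))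
    {K : ℝ} (hK : 0 < K) :
    Tendsto (fun t : ℝ => t ^ γ * Lam μ (K * t)) (nhdsWithin 0 (Set.Ioi 0))
      (nhds (K ^ (-γ) * a)) := by
  have h1 : Tendsto (fun t : ℝ => K * t) (nhdsWithin 0 (Set.Ioi 0))
      (nhdsWithin 0 (Set.Ioi 0)) := by
    rw [tendsto_nhdsWithin_iff]
    constructor
    · have h0 : Tendsto (fun t : ℝ => K * t) (nhds 0) (nhds (K * 0)) :=
        (continuous_const.mul continuous_id).tendsto 0
      rw [mul_zero] at h0
      exact h0.mono_left nhdsWithin_le_nhds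
    · filter_upwards [self_mem_nhdsWithin] with t ht
      exact mul_pos hK ht
  have h2 := hasym.comp h1
  have h3 := h2.const_mul (K ^ (-γ))
  refine h3.congr' ?_
  filter_upwards [self_mem_nhdsWithin] with t ht
  show K ^ (-γ) * (Lam μ (K * t) * (K * t) ^ γ) = t ^ γ * Lam μ (K * t)
  rw [Real.mul_rpow hK.le (le_of_lt ht)]
  have hKK : K ^ (-γ) * K ^ γ = 1 := by
    rw [← Real.rpow_add hK]
    norm_num
  linear_combination (Lam μ (K * t) * t ^ γ) * hKK

lemma tendsto_poly (hγ : 0 < γ)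
    (hfin : ∀ t : ℝ, 0 < t → (∫⁻ E, ENNReal.ofReal (Real.exp (-t * E)) ∂μ) < ⊤)
    (hasym : Tendsto (fun t : ℝ => Lam μ t * t ^ γ) (nhdsWithin 0 (Set.Ioi 0)) (nhds a))
    (q : ℝ[X]) :
    Tendsto (fun t : ℝ => t ^ γ * ∫ E, exp (-t * E) * q.eval (exp (-t * E)) ∂μ)
      (nhdsWithin 0 (Set.Ioi 0))
      (nhds (∑ k ∈ Finset.range (q.natDegree + 1),
        q.coeff k * (((k:ℝ) + 1) ^ (-γ) * a))) := by
  have hsum : Tendsto (fun t : ℝ => ∑ k ∈ Finset.range (q.natDegree + 1),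
      q.coeff k * (t ^ γ * Lam μ (((k:ℝ) + 1) * t))) (nhdsWithin 0 (Set.Ioi 0))
      (nhds (∑ k ∈ Finset.range (q.natDegree + 1),
        q.coeff k * (((k:ℝ) + 1) ^ (-γ) * a))) := by
    apply tendsto_finset_sum
    intro k _
    exact (tendsto_term hasym (by positivity)).const_mul _
  refine hsum.congr' ?_
  filter_upwards [self_mem_nhdsWithin] with t ht
  rw [poly_integral_eq hfin q ht, Finset.mul_sum]
  exact Finset.sum_congr rfl fun k _ => by ring


set_option maxHeartbeats 2000000 in
lemma key (μ : Measure ℝ) (a γ : ℝ) (ha : 0 < a) (hγ : 0 < γ)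
    (hsupp : μ (Set.Iio 0) = 0)
    (hfin : ∀ t : ℝ, 0 < t → (∫⁻ E, ENNReal.ofReal (Real.exp (-t * E)) ∂μ) < ⊤)
    (hasym : Tendsto (fun t : ℝ => Lam μ t * t ^ γ) (nhdsWithin 0 (Set.Ioi 0)) (nhds a)) :
    Tendsto (fun t : ℝ => t ^ γ * (μ (Set.Iio (1/t))).toReal) (nhdsWithin 0 (Set.Ioi 0))
      (nhds (a / Real.Gamma (γ + 1))) := by
  rw [Metric.tendsto_nhds]
  intro ε hε
  have hΓ : 0 < Real.Gamma γ := Real.Gamma_pos_of_pos hγ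
  have hc : a / Real.Gamma (γ + 1) = (a / Real.Gamma γ) * (1/γ) := by
    rw [Real.Gamma_add_one hγ.ne', div_mul_div_comm, mul_one, mul_comm γ (Real.Gamma γ)]
  set Cγ : ℝ := 2 ^ γ + 2 with hCγdef
  have hCγ : 0 < Cγ := by positivity
  set η : ℝ := min (1/2) (ε * Real.Gamma γ / (4 * a * Cγ + 1)) with hηdef
  have hη0 : 0 < η := lt_min (by norm_num) (by positivity)
  have hη2 : η ≤ 1/2 := min_le_left _ _
  have hηb : (a / Real.Gamma γ) * (Cγ * η) ≤ ε/4 := by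
    have h4 : (0:ℝ) < 4 * a * Cγ + 1 := by positivity
    have h1 : η ≤ ε * Real.Gamma γ / (4 * a * Cγ + 1) := min_le_right _ _
    have key1 : (a / Real.Gamma γ) * (Cγ * (ε * Real.Gamma γ / (4 * a * Cγ + 1))) ≤ ε/4 := by
      have heq : (a / Real.Gamma γ) * (Cγ * (ε * Real.Gamma γ / (4 * a * Cγ + 1)))
          = ε * (a * Cγ) / (4 * a * Cγ + 1) := by
        field_simp
      rw [heq, div_le_iff₀ h4]
      nlinarith [hε.le, mul_pos ha hCγ]
    calc (a / Real.Gamma γ) * (Cγ * η)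
        ≤ (a / Real.Gamma γ) * (Cγ * (ε * Real.Gamma γ / (4 * a * Cγ + 1))) := by
          apply mul_le_mul_of_nonneg_left (mul_le_mul_of_nonneg_left h1 hCγ.le) (by positivity)
      _ ≤ ε/4 := key1
  set ε₁ : ℝ := ε / (16 * a + 1) with hε₁def
  have hε₁0 : 0 < ε₁ := by positivity
  have hε₁b : (a / Real.Gamma γ) * (2 * ε₁ * Real.Gamma γ) ≤ ε/4 := by
    have heq : (a / Real.Gamma γ) * (2 * ε₁ * Real.Gamma γ) = 2 * a * ε / (16 * a + 1) := by
      rw [hε₁def]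
      field_simp
    rw [heq, div_le_iff₀ (by positivity)]
    nlinarith [hε.le, ha.le, mul_pos ha hε]
  -- third gamma integral
  have hgt0 : ∫ u in Ioi (0:ℝ), exp (-u) ^ (0+1) * u ^ (γ - 1) = Real.Gamma γ := by
    rw [gamma_term hγ 0]
    norm_num
  have hint2a := g_limit_integrable (γ := γ) hγ
  have hint2c := (gamma_term_integrable (γ := γ) hγ 0).const_mul (2 * ε₁)
  ---------------------------------------------------------------------------
  -- UPPER bound
  ---------------------------------------------------------------------------
  have upper : ∀ᶠ t in nhdsWithin 0 (Set.Ioi 0),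
      t ^ γ * (μ (Set.Iio (1/t))).toReal < a / Real.Gamma (γ + 1) + ε := by
    set b : ℝ := Real.exp (-(1+η)) with hbdef
    have hb : 0 < b := exp_pos _
    set d : ℝ := Real.exp (-1) - b with hddef
    have hd : 0 < d := by
      rw [hddef, sub_pos, hbdef]
      exact Real.exp_lt_exp.2 (by linarith)
    have hbd : b + d = Real.exp (-1) := by rw [hddef]; ring
    obtain ⟨r, hr⟩ := exists_polynomial_near_of_continuousOn 0 1 (ramp b d)
      (continuous_ramp hb).continuousOn ε₁ hε₁0
    set q : ℝ[X] := r + Polynomial.C ε₁ with hqdef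
    have hq : ∀ x : ℝ, q.eval x = r.eval x + ε₁ := fun x => by simp [hqdef]
    have hql : ∀ x ∈ Set.Icc (0:ℝ) 1, ramp b d x ≤ q.eval x := by
      intro x hx
      have h := abs_lt.1 (hr x hx)
      rw [hq]
      linarith [h.1]
    have hqu : ∀ x ∈ Set.Icc (0:ℝ) 1, q.eval x ≤ ramp b d x + 2 * ε₁ := by
      intro x hx
      have h := abs_lt.1 (hr x hx)
      rw [hq]
      linarith [h.2]
    set P : ℝ := ∑ k ∈ Finset.range (q.natDegree + 1),
        q.coeff k * (((k:ℝ) + 1) ^ (-γ) * a) with hPdef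
    have hPeq : P = (a / Real.Gamma γ)
        * ∫ u in Ioi (0:ℝ), (exp (-u) * q.eval (exp (-u))) * u ^ (γ - 1) := by
      rw [hPdef, limit_expand hγ q, Finset.mul_sum]
      refine Finset.sum_congr rfl fun k _ => ?_
      field_simp
    have hint2b := err_integrable (γ := γ) hγ (show (0:ℝ) < 1 by norm_num) hη0.le
    have hIbound : ∫ u in Ioi (0:ℝ), (exp (-u) * q.eval (exp (-u))) * u ^ (γ - 1)
        ≤ 1/γ + Cγ * η + 2 * ε₁ * Real.Gamma γ := by
      have hmono : ∫ u in Ioi (0:ℝ), (exp (-u) * q.eval (exp (-u))) * u ^ (γ - 1)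
          ≤ ∫ u in Ioi (0:ℝ),
            ((if Real.exp (-1) < Real.exp (-u) then (1:ℝ) else 0) * u ^ (γ - 1)
              + (Icc 1 (1+η)).indicator (fun _ => (1:ℝ)) u * u ^ (γ - 1)
              + 2 * ε₁ * (exp (-u) ^ (0+1) * u ^ (γ - 1))) := by
        apply setIntegral_mono_on (limit_integrable hγ q)
          ((hint2a.add hint2b).add hint2c) measurableSet_Ioi
        intro u hu
        have hu0 : (0:ℝ) < u := hu
        have hw : (0:ℝ) ≤ u ^ (γ - 1) := Real.rpow_nonneg hu0.le _
        set x : ℝ := exp (-u) with hxdef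
        have hx0 : 0 < x := exp_pos _
        have hx1 : x ≤ 1 := exp_le_one_iff.2 (by linarith)
        have hcore : x * q.eval x
            ≤ (if Real.exp (-1) < x then (1:ℝ) else 0)
              + (Icc 1 (1+η)).indicator (fun _ => (1:ℝ)) u + 2 * ε₁ * x := by
          have hup : x * q.eval x ≤ x * ramp b d x + 2 * ε₁ * x := by
            calc x * q.eval x ≤ x * (ramp b d x + 2 * ε₁) :=
                  mul_le_mul_of_nonneg_left (hqu x ⟨hx0.le, hx1⟩) hx0.le
              _ = x * ramp b d x + 2 * ε₁ * x := by ring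
          have hind : (0:ℝ) ≤ (Icc 1 (1+η)).indicator (fun _ => (1:ℝ)) u :=
            Set.indicator_nonneg (fun _ _ => zero_le_one) u
          have hg : (0:ℝ) ≤ if Real.exp (-1) < x then (1:ℝ) else 0 := by
            split_ifs <;> norm_num
          by_cases h1 : 1 + η < u
          · have hxb : x ≤ b := by
              rw [hxdef, hbdef]
              exact Real.exp_le_exp.2 (by linarith)
            rw [mul_ramp_of_le hd hxb] at hup
            linarith
          · push_neg at h1
            have hr1 : x * ramp b d x ≤ 1 := mul_ramp_le_one hb hx0.le
            by_cases h2 : u < 1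
            · have hgx : Real.exp (-1) < x := by
                rw [hxdef]
                exact Real.exp_lt_exp.2 (by linarith)
              rw [if_pos hgx]
              linarith
            · push_neg at h2
              have hindeq : (Icc 1 (1+η)).indicator (fun _ => (1:ℝ)) u = 1 :=
                Set.indicator_of_mem (Set.mem_Icc.mpr ⟨h2, h1⟩) _
              rw [hindeq]
              linarith
        calc (x * q.eval x) * u ^ (γ - 1)
            ≤ ((if Real.exp (-1) < x then (1:ℝ) else 0)
                + (Icc 1 (1+η)).indicator (fun _ => (1:ℝ)) u + 2 * ε₁ * x) * u ^ (γ - 1) :=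
              mul_le_mul_of_nonneg_right hcore hw
          _ = (if Real.exp (-1) < x then (1:ℝ) else 0) * u ^ (γ - 1)
                + (Icc 1 (1+η)).indicator (fun _ => (1:ℝ)) u * u ^ (γ - 1)
                + 2 * ε₁ * (x ^ (0+1) * u ^ (γ - 1)) := by
              rw [zero_add, pow_one]
              ring
      have herr := err_bound (γ := γ) hγ (show (1:ℝ)/2 ≤ 1 by norm_num) hη0.le
        (show (1:ℝ) + η ≤ 2 by linarith)
      have hab : Integrable (fun u : ℝ =>
          (if Real.exp (-1) < Real.exp (-u) then (1:ℝ) else 0) * u ^ (γ - 1)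
            + (Icc 1 (1+η)).indicator (fun _ => (1:ℝ)) u * u ^ (γ - 1))
          (volume.restrict (Ioi 0)) := hint2a.add hint2b
      rw [integral_add hab hint2c, integral_add hint2a hint2b,
        g_limit_integral hγ, integral_const_mul, hgt0] at hmono
      linarith
    have hμle : ∀ t : ℝ, 0 < t → (μ (Set.Iio (1/t))).toReal
        ≤ ∫ E, exp (-t * E) * q.eval (exp (-t * E)) ∂μ := by
      intro t ht
      rw [measure_Iio_toReal_eq ht]
      apply integral_mono_ae (integrable_g hfin hsupp ht) (poly_integrable hfin q ht)
      filter_upwards [aeNonneg hsupp] with E hE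
      set x : ℝ := exp (-t * E) with hxdef
      have hx0 : 0 < x := exp_pos _
      have hx1 : x ≤ 1 := exp_le_one_iff.2 (by nlinarith)
      by_cases hgx : Real.exp (-1) < x
      · rw [if_pos hgx]
        have h1 : x * ramp b d x = 1 := mul_ramp_of_ge hb hd (by rw [hbd]; exact hgx.le)
        calc (1:ℝ) = x * ramp b d x := h1.symm
          _ ≤ x * q.eval x := mul_le_mul_of_nonneg_left (hql x ⟨hx0.le, hx1⟩) hx0.le
      · rw [if_neg hgx]
        exact mul_nonneg hx0.le (le_trans (ramp_nonneg hb x) (hql x ⟨hx0.le, hx1⟩))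
    have hP2 : P ≤ a / Real.Gamma (γ + 1) + ε/2 := by
      rw [hPeq, hc]
      have := mul_le_mul_of_nonneg_left hIbound
        (show (0:ℝ) ≤ a / Real.Gamma γ by positivity)
      nlinarith [hηb, hε₁b]
    have htp := Metric.tendsto_nhds.mp (tendsto_poly hγ hfin hasym q) (ε/4) (by positivity)
    filter_upwards [htp, self_mem_nhdsWithin] with t hdist ht
    have ht0 : (0:ℝ) < t := ht
    have h1 : t ^ γ * (μ (Set.Iio (1/t))).toReal
        ≤ t ^ γ * ∫ E, exp (-t * E) * q.eval (exp (-t * E)) ∂μ :=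
      mul_le_mul_of_nonneg_left (hμle t ht0) (Real.rpow_nonneg ht0.le γ)
    rw [Real.dist_eq] at hdist
    have h2 := (abs_lt.1 hdist).2
    linarith
  ---------------------------------------------------------------------------
  -- LOWER bound
  ---------------------------------------------------------------------------
  have lower : ∀ᶠ t in nhdsWithin 0 (Set.Ioi 0),
      a / Real.Gamma (γ + 1) - ε < t ^ γ * (μ (Set.Iio (1/t))).toReal := by
    set b : ℝ := Real.exp (-1) with hbdef
    have hb : 0 < b := exp_pos _
    set d : ℝ := Real.exp (-(1-η)) - b with hddef
    have hd : 0 < d := by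
      rw [hddef, sub_pos, hbdef]
      exact Real.exp_lt_exp.2 (by linarith)
    have hbd : b + d = Real.exp (-(1-η)) := by rw [hddef]; ring
    obtain ⟨r, hr⟩ := exists_polynomial_near_of_continuousOn 0 1 (ramp b d)
      (continuous_ramp hb).continuousOn ε₁ hε₁0
    set q : ℝ[X] := r - Polynomial.C ε₁ with hqdef
    have hq : ∀ x : ℝ, q.eval x = r.eval x - ε₁ := fun x => by simp [hqdef]
    have hql : ∀ x ∈ Set.Icc (0:ℝ) 1, q.eval x ≤ ramp b d x := by
      intro x hx
      have h := abs_lt.1 (hr x hx)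
      rw [hq]
      linarith [h.2]
    have hqu : ∀ x ∈ Set.Icc (0:ℝ) 1, ramp b d x - 2 * ε₁ ≤ q.eval x := by
      intro x hx
      have h := abs_lt.1 (hr x hx)
      rw [hq]
      linarith [h.1]
    set P : ℝ := ∑ k ∈ Finset.range (q.natDegree + 1),
        q.coeff k * (((k:ℝ) + 1) ^ (-γ) * a) with hPdef
    have hPeq : P = (a / Real.Gamma γ)
        * ∫ u in Ioi (0:ℝ), (exp (-u) * q.eval (exp (-u))) * u ^ (γ - 1) := by
      rw [hPdef, limit_expand hγ q, Finset.mul_sum]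
      refine Finset.sum_congr rfl fun k _ => ?_
      field_simp
    have hs0 : (0:ℝ) < 1 - η := by linarith
    have hint2b := err_integrable (γ := γ) hγ hs0 hη0.le
    have hIbound : 1/γ - Cγ * η - 2 * ε₁ * Real.Gamma γ
        ≤ ∫ u in Ioi (0:ℝ), (exp (-u) * q.eval (exp (-u))) * u ^ (γ - 1) := by
      have hmono : ∫ u in Ioi (0:ℝ),
            ((if Real.exp (-1) < Real.exp (-u) then (1:ℝ) else 0) * u ^ (γ - 1)
              - (Icc (1-η) (1-η+η)).indicator (fun _ => (1:ℝ)) u * u ^ (γ - 1)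
              - 2 * ε₁ * (exp (-u) ^ (0+1) * u ^ (γ - 1)))
          ≤ ∫ u in Ioi (0:ℝ), (exp (-u) * q.eval (exp (-u))) * u ^ (γ - 1) := by
        apply setIntegral_mono_on ((hint2a.sub hint2b).sub hint2c)
          (limit_integrable hγ q) measurableSet_Ioi
        intro u hu
        have hu0 : (0:ℝ) < u := hu
        have hw : (0:ℝ) ≤ u ^ (γ - 1) := Real.rpow_nonneg hu0.le _
        set x : ℝ := exp (-u) with hxdef
        have hx0 : 0 < x := exp_pos _
        have hx1 : x ≤ 1 := exp_le_one_iff.2 (by linarith)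
        have hcore : (if Real.exp (-1) < x then (1:ℝ) else 0)
              - (Icc (1-η) (1-η+η)).indicator (fun _ => (1:ℝ)) u - 2 * ε₁ * x
            ≤ x * q.eval x := by
          have hlo : x * ramp b d x - 2 * ε₁ * x ≤ x * q.eval x := by
            calc x * ramp b d x - 2 * ε₁ * x = x * (ramp b d x - 2 * ε₁) := by ring
              _ ≤ x * q.eval x :=
                  mul_le_mul_of_nonneg_left (hqu x ⟨hx0.le, hx1⟩) hx0.le
          have hind : (0:ℝ) ≤ (Icc (1-η) (1-η+η)).indicator (fun _ => (1:ℝ)) u :=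
            Set.indicator_nonneg (fun _ _ => zero_le_one) u
          have hramp0 : 0 ≤ x * ramp b d x := mul_ramp_nonneg hb hx0.le
          by_cases h1 : u < 1 - η
          · have hxbd : b + d ≤ x := by
              rw [hbd, hxdef]
              exact (Real.exp_le_exp.2 (by linarith))
            have heq1 : x * ramp b d x = 1 := mul_ramp_of_ge hb hd hxbd
            have hgle : (if Real.exp (-1) < x then (1:ℝ) else 0) ≤ 1 := by
              split_ifs <;> norm_num
            linarith
          · push_neg at h1
            by_cases h2 : u ≤ 1
            · have hindeq : (Icc (1-η) (1-η+η)).indicator (fun _ => (1:ℝ)) u = 1 :=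
                Set.indicator_of_mem (Set.mem_Icc.mpr ⟨h1, by linarith⟩) _
              have hgle : (if Real.exp (-1) < x then (1:ℝ) else 0) ≤ 1 := by
                split_ifs <;> norm_num
              rw [hindeq]
              linarith
            · push_neg at h2
              have hg0 : (if Real.exp (-1) < x then (1:ℝ) else 0) = 0 := by
                rw [if_neg]
                rw [hxdef, Real.exp_lt_exp]
                linarith
              rw [hg0]
              linarith
        calc (if Real.exp (-1) < Real.exp (-u) then (1:ℝ) else 0) * u ^ (γ - 1)
              - (Icc (1-η) (1-η+η)).indicator (fun _ => (1:ℝ)) u * u ^ (γ - 1)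
              - 2 * ε₁ * (exp (-u) ^ (0+1) * u ^ (γ - 1))
            = ((if Real.exp (-1) < x then (1:ℝ) else 0)
                - (Icc (1-η) (1-η+η)).indicator (fun _ => (1:ℝ)) u - 2 * ε₁ * x) * u ^ (γ - 1) := by
              rw [zero_add, pow_one]
              ring
          _ ≤ (x * q.eval x) * u ^ (γ - 1) := mul_le_mul_of_nonneg_right hcore hw
      have herr := err_bound (γ := γ) hγ (show (1:ℝ)/2 ≤ 1 - η by linarith) hη0.le
        (show (1:ℝ) - η + η ≤ 2 by linarith)
      have hab : Integrable (fun u : ℝ =>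
          (if Real.exp (-1) < Real.exp (-u) then (1:ℝ) else 0) * u ^ (γ - 1)
            - (Icc (1-η) (1-η+η)).indicator (fun _ => (1:ℝ)) u * u ^ (γ - 1))
          (volume.restrict (Ioi 0)) := hint2a.sub hint2b
      rw [integral_sub hab hint2c, integral_sub hint2a hint2b,
        g_limit_integral hγ, integral_const_mul, hgt0] at hmono
      linarith
    have hμge : ∀ t : ℝ, 0 < t →
        (∫ E, exp (-t * E) * q.eval (exp (-t * E)) ∂μ) ≤ (μ (Set.Iio (1/t))).toReal := by
      intro t ht
      rw [measure_Iio_toReal_eq ht]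
      apply integral_mono_ae (poly_integrable hfin q ht) (integrable_g hfin hsupp ht)
      filter_upwards [aeNonneg hsupp] with E hE
      set x : ℝ := exp (-t * E) with hxdef
      have hx0 : 0 < x := exp_pos _
      have hx1 : x ≤ 1 := exp_le_one_iff.2 (by nlinarith)
      have hstep : x * q.eval x ≤ x * ramp b d x :=
        mul_le_mul_of_nonneg_left (hql x ⟨hx0.le, hx1⟩) hx0.le
      by_cases hgx : Real.exp (-1) < x
      · rw [if_pos hgx]
        exact le_trans hstep (mul_ramp_le_one hb hx0.le)
      · rw [if_neg hgx]
        have hxb : x ≤ b := not_lt.1 hgx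
        rw [mul_ramp_of_le hd hxb] at hstep
        exact hstep
    have hP2 : a / Real.Gamma (γ + 1) - ε/2 ≤ P := by
      rw [hPeq, hc]
      have := mul_le_mul_of_nonneg_left hIbound
        (show (0:ℝ) ≤ a / Real.Gamma γ by positivity)
      nlinarith [hηb, hε₁b]
    have htp := Metric.tendsto_nhds.mp (tendsto_poly hγ hfin hasym q) (ε/4) (by positivity)
    filter_upwards [htp, self_mem_nhdsWithin] with t hdist ht
    have ht0 : (0:ℝ) < t := ht
    have h1 : t ^ γ * ∫ E, exp (-t * E) * q.eval (exp (-t * E)) ∂μ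
        ≤ t ^ γ * (μ (Set.Iio (1/t))).toReal :=
      mul_le_mul_of_nonneg_left (hμge t ht0) (Real.rpow_nonneg ht0.le γ)
    rw [Real.dist_eq] at hdist
    have h2 := (abs_lt.1 hdist).1
    linarith
  filter_upwards [upper, lower] with t h1 h2
  rw [Real.dist_eq, abs_sub_lt_iff]
  constructor <;> linarith

end Karamata

/-- Karamata Tauberian theorem (counting-measure version): let `μ` be a non-negative
Borel measure on `[0,∞)` whose Laplace transform `L(t) = ∫ e^{−tE} dμ(E)` is finite
for all `t > 0` and satisfies `L(t) = a t^{−γ}(1+o(1))` as `t ↓ 0` for some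
`a, γ > 0`. Then `μ([0,E)) = (a/Γ(γ+1)) E^γ (1+o(1))` as `E → ∞`. -/
theorem stmt13 (μ : Measure ℝ) (a γ : ℝ) (ha : 0 < a) (hγ : 0 < γ)
    (hsupp : μ (Set.Iio 0) = 0)
    (hfin : ∀ t : ℝ, 0 < t →
      (∫⁻ E, ENNReal.ofReal (Real.exp (-t * E)) ∂μ) < ⊤)
    (hasym : Tendsto
      (fun t : ℝ => (∫⁻ E, ENNReal.ofReal (Real.exp (-t * E)) ∂μ).toReal * t ^ γ)
      (nhdsWithin 0 (Set.Ioi 0)) (nhds a)) :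
    Tendsto (fun E : ℝ => (μ (Set.Iio E)).toReal / E ^ γ) atTop
      (nhds (a / Real.Gamma (γ + 1))) := by
  have hasym' : Tendsto (fun t : ℝ => Karamata.Lam μ t * t ^ γ)
      (nhdsWithin 0 (Set.Ioi 0)) (nhds a) := hasym
  have hkey := Karamata.key μ a γ ha hγ hsupp hfin hasym'
  have h2 := hkey.comp tendsto_inv_atTop_nhdsGT_zero
  refine h2.congr' ?_
  filter_upwards [eventually_gt_atTop (0:ℝ)] with E hE
  show E⁻¹ ^ γ * (μ (Set.Iio (1 / E⁻¹))).toReal = (μ (Set.Iio E)).toReal / E ^ γ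
  rw [one_div, inv_inv, Real.inv_rpow hE.le, inv_mul_eq_div]
end

section
/- Let H₀ be self-adjoint, P an orthogonal projection with P H₀ Q = 0 (Q = I − P), and suppose inf σ(Q H₀ Q restricted to Ran Q) ≥ c. If 0 ≤ V ≤ M and E + (δ⁻¹ − 1)M < c for some δ ∈ (0,1), then N(H₀ + V; E) ≤ N(P(H₀ + (1−δ)V)P restricted to Ran P; E), where N denotes the eigenvalue counting function below E. -/
open Module

/-- Min-max eigenvalue counting function of the quadratic form `q` on the domain `D`. -/
noncomputable def specCount {H : Type*} [NormedAddCommGroup H] [InnerProductSpace ℂ H]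
    (q : H → ℝ) (D : Set H) (E : ℝ) : ℕ∞ :=
  ⨆ (V : Submodule ℂ H) (_ : (V : Set H) ⊆ D ∧ ∀ f ∈ V, f ≠ 0 → q f < E * ‖f‖ ^ 2),
    (Module.finrank ℂ V : ℕ∞)

lemma qform_zero {H : Type*} [NormedAddCommGroup H] [InnerProductSpace ℂ H]
    (A : H →L[ℂ] H) : qform A 0 = 0 := by
  simp [qform]

lemma qform_add {H : Type*} [NormedAddCommGroup H] [InnerProductSpace ℂ H]
    (A B : H →L[ℂ] H) (f : H) : qform (A + B) f = qform A f + qform B f := by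
  simp [qform, ContinuousLinearMap.add_apply, inner_add_left]

lemma qform_real_smul {H : Type*} [NormedAddCommGroup H] [InnerProductSpace ℂ H]
    (r : ℝ) (A : H →L[ℂ] H) (f : H) : qform (((r : ℂ)) • A) f = r * qform A f := by
  simp only [qform, ContinuousLinearMap.smul_apply, inner_smul_left, Complex.conj_ofReal,
    Complex.mul_re, Complex.ofReal_re, Complex.ofReal_im]
  ring

lemma qform_expand_s17 {H : Type*} [NormedAddCommGroup H] [InnerProductSpace ℂ H]
    [CompleteSpace H] (A : H →L[ℂ] H) (hA : IsSelfAdjoint A) (a b : ℝ) (u v : H) :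
    qform A ((a : ℂ) • u + (b : ℂ) • v)
      = a ^ 2 * qform A u + b ^ 2 * qform A v
        + 2 * (a * b) * Complex.re (@inner ℂ H _ (A u) v) := by
  have hsym : ∀ x y : H, (@inner ℂ H _ (A x) y) = @inner ℂ H _ x (A y) :=
    fun x y => hA.isSymmetric x y
  have h1 : (@inner ℂ H _ (A v) u) = starRingEnd ℂ (@inner ℂ H _ (A u) v) := by
    rw [hsym v u, ← inner_conj_symm]
  simp only [qform, map_add, map_smul, inner_add_left, inner_add_right, inner_smul_left,
    inner_smul_right, Complex.add_re, Complex.mul_re, h1, Complex.conj_ofReal,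
    Complex.conj_re, Complex.conj_im, Complex.ofReal_re, Complex.ofReal_im]
  ring

/-- Let `H₀` be self-adjoint, `P` an orthogonal projection with `P H₀ Q = 0`
(`Q = I − P`), and suppose `inf σ(Q H₀ Q |_{Ran Q}) ≥ c`. If `0 ≤ V ≤ M` and
`E + (δ⁻¹ − 1) M < c` for some `δ ∈ (0,1)`, then
`N(H₀ + V; E) ≤ N(P(H₀ + (1−δ)V)P |_{Ran P}; E)`. -/
theorem stmt17 {H : Type*} [NormedAddCommGroup H] [InnerProductSpace ℂ H] [CompleteSpace H]
    (H₀ V P : H →L[ℂ] H) (M c E δ : ℝ)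
    (hH₀ : IsSelfAdjoint H₀) (hP : IsSelfAdjoint P) (hPproj : P ∘L P = P)
    (hPQ : P ∘L (H₀ ∘L (1 - P)) = 0)
    (hgap : ∀ f : H, (1 - P) f = f → c * ‖f‖ ^ 2 ≤ qform H₀ f)
    (hV : IsSelfAdjoint V)
    (hV0 : ∀ f, 0 ≤ qform V f)
    (hVM : ∀ f, qform V f ≤ M * ‖f‖ ^ 2)
    (hδ : δ ∈ Set.Ioo (0 : ℝ) 1)
    (hE : E + (δ⁻¹ - 1) * M < c) :
    specCount (qform (H₀ + V)) Set.univ E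
      ≤ specCount (qform (H₀ + ((1 - δ : ℝ) : ℂ) • V)) {f : H | P f = f} E := by
  obtain ⟨hδ0, hδ1⟩ := hδ
  refine iSup₂_le fun W hW => ?_
  obtain ⟨-, hWq⟩ := hW
  -- Key analytic estimate
  have hkey : ∀ f ∈ W, f ≠ 0 →
      qform (H₀ + ((1 - δ : ℝ) : ℂ) • V) (P f) < E * ‖P f‖ ^ 2 := by
    intro f hf hf0
    set u := P f with hu
    set v := f - P f with hv
    have huv : u + v = f := by simp [hu, hv]
    have hPPf : P (P f) = P f := by
      have := congrArg (fun T : H →L[ℂ] H => T f) hPproj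
      simpa using this
    have hPv : P v = 0 := by simp [hv, map_sub, hPPf]
    have hPsym : ∀ x y : H, (@inner ℂ H _ (P x) y) = @inner ℂ H _ x (P y) :=
      fun x y => hP.isSymmetric x y
    have hH₀sym : ∀ x y : H, (@inner ℂ H _ (H₀ x) y) = @inner ℂ H _ x (H₀ y) :=
      fun x y => hH₀.isSymmetric x y
    have hinner_uv : (@inner ℂ H _ u v) = 0 := by
      rw [hu, hPsym f v]
      simp [hPv]
    have hnorm : ‖f‖ ^ 2 = ‖u‖ ^ 2 + ‖v‖ ^ 2 := by
      rw [← huv, @norm_add_sq ℂ]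
      simp [hinner_uv]
    have hvQ : (1 - P) v = v := by
      simp [ContinuousLinearMap.sub_apply, hPv]
    -- cross term of H₀ vanishes
    have hH0cross : (@inner ℂ H _ (H₀ u) v) = 0 := by
      have h1 : (@inner ℂ H _ (H₀ u) v) = @inner ℂ H _ f (P (H₀ v)) := by
        rw [hH₀sym u v, hu, hPsym f (H₀ v)]
      have h2 : v = (1 - P) f := by
        simp [hv, ContinuousLinearMap.sub_apply]
      have h3 : P (H₀ v) = 0 := by
        have := congrArg (fun T : H →L[ℂ] H => T f) hPQ
        simpa [h2] using this
      rw [h1, h3, inner_zero_right]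
    have hqH0 : qform H₀ f = qform H₀ u + qform H₀ v := by
      have := qform_expand_s17 H₀ hH₀ 1 1 u v
      simpa [huv, hH0cross] using this
    -- V quadratic form splitting estimate
    have e1 : qform V f = qform V u + qform V v
        + 2 * Complex.re (@inner ℂ H _ (V u) v) := by
      have := qform_expand_s17 V hV 1 1 u v
      simpa [huv] using this
    have e2 : 0 ≤ δ * qform V u + δ⁻¹ * qform V v
        + 2 * Complex.re (@inner ℂ H _ (V u) v) := by
      have h := hV0 ((Real.sqrt δ : ℂ) • u + (Real.sqrt δ⁻¹ : ℂ) • v)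
      rw [qform_expand_s17 V hV (Real.sqrt δ) (Real.sqrt δ⁻¹) u v] at h
      have hs1 : Real.sqrt δ ^ 2 = δ := Real.sq_sqrt hδ0.le
      have hs2 : Real.sqrt δ⁻¹ ^ 2 = δ⁻¹ := Real.sq_sqrt (inv_nonneg.mpr hδ0.le)
      have hs3 : Real.sqrt δ * Real.sqrt δ⁻¹ = 1 := by
        rw [← Real.sqrt_mul hδ0.le, mul_inv_cancel₀ hδ0.ne', Real.sqrt_one]
      rw [hs1, hs2, hs3] at h
      linarith
    have hgapv : c * ‖v‖ ^ 2 ≤ qform H₀ v := hgap v hvQ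
    have hVv : qform V v ≤ M * ‖v‖ ^ 2 := hVM v
    have h5 : (1 - δ⁻¹) * (M * ‖v‖ ^ 2) ≤ (1 - δ⁻¹) * qform V v := by
      apply mul_le_mul_of_nonpos_left hVv
      have h1 : δ * δ⁻¹ = 1 := mul_inv_cancel₀ hδ0.ne'
      have h2 : 0 < δ⁻¹ := inv_pos.mpr hδ0
      nlinarith
    have h6 : 0 ≤ (c - E - (δ⁻¹ - 1) * M) * ‖v‖ ^ 2 := by
      apply mul_nonneg (by linarith) (by positivity)
    have hmain := hWq f hf hf0
    rw [qform_add, hnorm] at hmain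
    have hgoal : qform H₀ u + (1 - δ) * qform V u < E * ‖u‖ ^ 2 := by
      nlinarith [hmain, hqH0, e1, e2, hgapv, h5, h6]
    rw [qform_add, qform_real_smul]
    exact hgoal
  have hPne : ∀ f ∈ W, f ≠ 0 → P f ≠ 0 := by
    intro f hf hf0 hPf
    have := hkey f hf hf0
    rw [hPf, qform_zero] at this
    simp at this
  -- the image subspace
  set g : W →ₗ[ℂ] H := (P : H →ₗ[ℂ] H).comp W.subtype with hg
  have hginj : Function.Injective g := by
    intro x y hxy
    have hx : P ((x : H) - (y : H)) = 0 := by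
      have : P (x : H) = P (y : H) := hxy
      simp [map_sub, this]
    by_contra hne
    have hsub : ((x : H) - (y : H)) ∈ W := W.sub_mem x.2 y.2
    have hne' : (x : H) - (y : H) ≠ 0 := by
      intro h
      exact hne (Subtype.ext (sub_eq_zero.mp h))
    exact hPne _ hsub hne' hx
  set W' : Submodule ℂ H := W.map (P : H →ₗ[ℂ] H) with hW'
  have hrange : LinearMap.range g = W' := by
    rw [hg, LinearMap.range_comp, Submodule.range_subtype, hW']
  refine le_iSup₂_of_le W' ⟨?_, ?_⟩ ?_
  · -- W' ⊆ Ran P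
    rintro x ⟨f, hf, rfl⟩
    show P (P f) = P f
    have := congrArg (fun T : H →L[ℂ] H => T f) hPproj
    simpa using this
  · -- quadratic form estimate on W'
    rintro x ⟨f, hf, rfl⟩ hx0
    have hf0 : f ≠ 0 := by
      rintro rfl
      simp at hx0
    exact hkey f hf hf0
  · -- rank comparison
    have : finrank ℂ W = finrank ℂ W' := by
      rw [← hrange]
      exact (LinearEquiv.ofInjective g hginj).finrank_eq
    rw [this]
end
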